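/- arXiv:2104.15031 — 6 statements merged into one kernel-verified Lean document; each statement's English description precedes it below -/
import Mathlib

section
/- Suppose μ is a singular cardinal which is a limit of strongly compact cardinals. Then Pr₁(μ⁺, μ⁺, 2, cf(μ)⁺) fails. -/
open Cardinal Ordinal Set

noncomputable section

/-- The order type of a set of ordinals. -/
def otp (s : Set Ordinal) : Ordinal := Ordinal.type ((· < ·) : s → s → Prop)

/-- `a < b` for sets of ordinals: every element of `a` is below every element of `b`. -/
def SetLT (a b : Set Ordinal.{0}) : Prop := ∀ α ∈ a, ∀ β ∈ b, α < β

/-- `A` is a pairwise disjoint subfamily of `[κ]^σ`: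
a family of subsets of (ordinals below) `κ` of order type `σ`, pairwise disjoint. -/
def IsFamily (κ σ : Ordinal.{0}) (A : Set (Set Ordinal)) : Prop :=
  (∀ a ∈ A, a ⊆ Set.Iio κ ∧ otp a = Ordinal.lift.{1} σ) ∧ A.PairwiseDisjoint id

/-- Shelah's principle `Pr₁(κ, κ, θ, χ)`. -/
def Pr1 (κ θ χ : Cardinal.{0}) : Prop :=
  ∃ c : Ordinal → Ordinal → Ordinal,
    (∀ α β : Ordinal, α < β → β < κ.ord → c α β < θ.ord) ∧
    ∀ σ : Ordinal, σ < χ.ord → ∀ A : Set (Set Ordinal),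
      IsFamily κ.ord σ A → #A = Cardinal.lift.{1} κ →
      ∀ τ : Ordinal, τ < θ.ord →
        ∃ a ∈ A, ∃ b ∈ A, SetLT a b ∧ ∀ α ∈ a, ∀ β ∈ b, c α β = τ
/-- `D` is a club (closed unbounded set) in `κ`. -/
def ClubIn (D : Set Ordinal.{0}) (κ : Ordinal.{0}) : Prop :=
  D ⊆ Set.Iio κ ∧ (∀ α < κ, ∃ β ∈ D, α ≤ β) ∧
    ∀ δ < κ, 0 < δ → (∀ γ < δ, ∃ x ∈ D, γ < x ∧ x < δ) → δ ∈ D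

/-- `S` is a stationary subset of `κ`. -/
def StatIn (S : Set Ordinal.{0}) (κ : Ordinal.{0}) : Prop :=
  S ⊆ Set.Iio κ ∧ ∀ D : Set Ordinal, ClubIn D κ → (S ∩ D).Nonempty

/-- `δ` is an accumulation point belonging to `s`, i.e. `δ ∈ acc(s)`:
`δ ∈ s` and `sup(s ∩ δ) = δ > 0`. -/
def IsAccOf (s : Set Ordinal.{0}) (δ : Ordinal.{0}) : Prop :=
  δ ∈ s ∧ 0 < δ ∧ ∀ γ < δ, ∃ x ∈ s, γ < x ∧ x < δ

/-- `C` is a C-sequence over `κ`: each `C α` is a closed subset of `α`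
with `sup (C α) = sup α`. -/
def IsCSeq (κ : Ordinal.{0}) (C : Ordinal.{0} → Set Ordinal.{0}) : Prop :=
  (∀ α < κ, C α ⊆ Set.Iio α) ∧
  (∀ α < κ, ∀ δ, 0 < δ → δ < α → (∀ γ < δ, ∃ x ∈ C α, γ < x ∧ x < δ) → δ ∈ C α) ∧
  (∀ α < κ, ∀ γ : Ordinal, (∀ x ∈ C α, x ≤ γ) → ∀ δ < α, δ ≤ γ)

/-- The upper trace of the walk from `β` down to `α` along the C-sequence `C`. -/
def Tr (C : Ordinal.{0} → Set Ordinal.{0}) (α β : Ordinal.{0}) : ℕ → Ordinal.{0}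
  | 0 => β
  | n + 1 => if α < Tr C α β n then sInf (C (Tr C α β n) ∩ Set.Ici α) else α

/-- The length `ρ₂(α,β)` of the walk from `β` down to `α`. -/
def rho2 (C : Ordinal.{0} → Set Ordinal.{0}) (α β : Ordinal.{0}) : ℕ :=
  sInf {n | Tr C α β n = α}

/-- The (finite) trace `tr(α,β)` of the walk, as a list. -/
def trL (C : Ordinal.{0} → Set Ordinal.{0}) (α β : Ordinal.{0}) : List Ordinal.{0} :=
  (List.range (rho2 C α β)).map (Tr C α β)

/-- `λ(α,β) = max_{i<ρ₂(α,β)} sup (C_{Tr(α,β)(i)} ∩ α)`. -/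
def lamb (C : Ordinal.{0} → Set Ordinal.{0}) (α β : Ordinal.{0}) : Ordinal.{0} :=
  (Finset.range (rho2 C α β)).sup fun i => sSup (C (Tr C α β i) ∩ Set.Iio α)

/-- `η_{α,β} := min { n < ω ∣ η ∈ C_{Tr(α,β)(n)} or n = ρ₂(α,β) } + 1`. -/
def etaIdx (C : Ordinal.{0} → Set Ordinal.{0}) (η α β : Ordinal.{0}) : ℕ :=
  sInf {n | η ∈ C (Tr C α β n) ∨ n = rho2 C α β} + 1

/-- The transformation principle `Pℓ₁(κ, θ, χ)`. -/
def Pl1 (κ θ χ : Cardinal.{0}) : Prop :=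
  ∃ t : Ordinal.{0} → Ordinal.{0} → Ordinal.{0} × Ordinal.{0} × Ordinal.{0},
    (∀ α β : Ordinal, α < β → β < κ.ord →
      (t α β).1 ≤ (t α β).2.1 ∧ (t α β).2.1 ≤ α ∧ α < (t α β).2.2 ∧ (t α β).2.2 ≤ β) ∧
    ∀ σ : Ordinal, σ < χ.ord → ∀ A : Set (Set Ordinal),
      IsFamily κ.ord σ A → #A = Cardinal.lift.{1} κ →
      ∃ S : Set Ordinal, StatIn S κ.ord ∧
        ∀ αs ∈ S, ∀ βs ∈ S, αs < βs →
          ∀ τ : Ordinal, τ < θ.ord → τ < αs →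
            ∃ a ∈ A, ∃ b ∈ A, SetLT a b ∧
              ∀ α ∈ a, ∀ β ∈ b, t α β = (τ, αs, βs)

/-- The transformation principle `Pℓ₂(κ, Γ, χ)`. -/
def Pl2 (κ : Cardinal.{0}) (Γ : Set Ordinal.{0}) (χ : Cardinal.{0}) : Prop :=
  ∃ t : Ordinal.{0} → Ordinal.{0} → Ordinal.{0} × Ordinal.{0},
    (∀ α β : Ordinal, α < β → β < κ.ord →
      (t α β).1 ≤ α ∧ α < (t α β).2 ∧ (t α β).2 ≤ β) ∧
    ∀ σ : Ordinal, σ < χ.ord → ∀ A : Set (Set Ordinal),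
      IsFamily κ.ord σ A → #A = Cardinal.lift.{1} κ →
      ∃ D : Set Ordinal, ClubIn D κ.ord ∧
        ∀ αs ∈ Γ ∩ D, ∀ βs ∈ Γ ∩ D, αs < βs →
          ∃ a ∈ A, ∃ b ∈ A, SetLT a b ∧
            ∀ α ∈ a, ∀ β ∈ b, t α β = (αs, βs)

/-- The principle `Pr₁⁺(κ, θ, χ)`. -/
def Pr1plus (κ θ χ : Cardinal.{0}) : Prop :=
  ∃ o : Ordinal.{0} → Ordinal.{0} → Ordinal.{0},
    (∀ α β : Ordinal, 0 < α → α < β → β < κ.ord → o α β < α ∧ o α β < θ.ord) ∧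
    ∀ ζ : Ordinal, ζ < θ.ord → ∀ σ : Ordinal, σ < χ.ord →
      ∀ A : Set (Set Ordinal), IsFamily κ.ord σ A → #A = Cardinal.lift.{1} κ →
        ∃ γ < κ.ord, ∀ b : Set Ordinal,
          b ⊆ Set.Iio κ.ord → b ⊆ Set.Ici γ → otp b = Ordinal.lift.{1} σ →
          ∃ a ∈ A, a ⊆ Set.Iio γ ∧ ∀ α ∈ a, ∀ β ∈ b, o α β = ζ

/-- The oscillation principle `Pℓ₆(κ, χ)`. -/
def Pl6 (κ χ : Cardinal.{0}) : Prop :=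
  ∃ d : List Ordinal.{0} → ℕ,
    ∀ (u v : Ordinal.{0} → Set (List Ordinal.{0}))
      (s : Ordinal.{0} → List Ordinal.{0}) (φ : Ordinal.{0} → Ordinal.{0}),
      (∃ ε < κ.ord, ∀ α : Ordinal, ε ≤ α → α < κ.ord → φ α < α) →
      (∀ α < κ.ord, (u α).Nonempty ∧ #(u α) < Cardinal.lift.{1} χ ∧
        ∀ ϱ ∈ u α, (∀ x ∈ ϱ, x < κ.ord) ∧ α ∈ ϱ) →
      (∀ α < κ.ord, (v α).Nonempty ∧ #(v α) < Cardinal.lift.{1} χ ∧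
        ∀ σl ∈ v α, (∀ x ∈ σl, x < κ.ord) ∧ (s α ++ [α]) <+: σl) →
      ∃ α β : Ordinal, α < β ∧ β < κ.ord ∧ φ α = φ β ∧
        ∀ ϱ ∈ u α, ∀ σl ∈ v β, d (ϱ ++ σl) = ϱ.length

/-- Shelah's principle `Pr₆(κ, κ, θ, χ)`. -/
def Pr6 (κ θ χ : Cardinal.{0}) : Prop :=
  ∃ d : List Ordinal.{0} → Ordinal.{0},
    (∀ l, d l < θ.ord) ∧
    ∀ τ : Ordinal, τ < θ.ord → ∀ E : Set Ordinal, ClubIn E κ.ord →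
      ∀ u v : Ordinal.{0} → Set (List Ordinal.{0}),
        (∀ α ∈ E, (u α).Nonempty ∧ #(u α) < Cardinal.lift.{1} χ ∧
          ∀ ϱ ∈ u α, (∀ x ∈ ϱ, x < κ.ord) ∧ α ∈ ϱ) →
        (∀ α ∈ E, (v α).Nonempty ∧ #(v α) < Cardinal.lift.{1} χ ∧
          ∀ σl ∈ v α, (∀ x ∈ σl, x < κ.ord) ∧ α ∈ σl) →
        ∃ α ∈ E, ∃ β ∈ E, α < β ∧
          ∀ ϱ ∈ u α, ∀ σl ∈ v β, d (ϱ ++ σl) = τ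

/-- The square principle `□(κ)`. -/
def SquarePrin (κ : Ordinal.{0}) : Prop :=
  ∃ C : Ordinal.{0} → Set Ordinal.{0},
    (∀ α < κ, C α ⊆ Set.Iio α) ∧
    (∀ α < κ, Order.IsSuccLimit α →
      (∀ γ < α, ∃ x ∈ C α, γ < x) ∧
      (∀ δ < α, 0 < δ → (∀ γ < δ, ∃ x ∈ C α, γ < x ∧ x < δ) → δ ∈ C α)) ∧
    (∀ α < κ, ∀ δ, IsAccOf (C α) δ → C α ∩ Set.Iio δ = C δ) ∧
    ¬ ∃ D : Set Ordinal, ClubIn D κ ∧ ∀ δ, IsAccOf D δ → D ∩ Set.Iio δ = C δ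

/-- The stick principle `⫯(κ)` (with witnesses of size `μ`). -/
def Stick (κ μ : Cardinal.{0}) : Prop :=
  ∃ X : Ordinal.{0} → Set Ordinal.{0},
    (∀ γ < κ.ord, X γ ⊆ Set.Iio κ.ord) ∧
    ∀ Y : Set Ordinal, Y ⊆ Set.Iio κ.ord → #Y = Cardinal.lift.{1} κ →
      ∃ γ < κ.ord, X γ ⊆ Y ∧ #(X γ) = Cardinal.lift.{1} μ

/-- A filter is `λ`-complete: it is closed under intersections of fewer than `λ` sets. -/
def FilterComplete (lam : Cardinal.{0}) {α : Type 1} (F : Filter α) : Prop :=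
  ∀ ι : Type 1, #ι < Cardinal.lift.{1} lam →
    ∀ f : ι → Set α, (∀ i, f i ∈ F) → (⋂ i, f i) ∈ F

/-- `lam` is a strongly compact cardinal: every `lam`-complete (proper) filter
extends to a `lam`-complete ultrafilter. -/
def IsStronglyCompact (lam : Cardinal.{0}) : Prop :=
  ∀ (α : Type 1) (F : Filter α), F.NeBot → FilterComplete lam F →
    ∃ U : Ultrafilter α, (↑U : Filter α) ≤ F ∧ FilterComplete lam (↑U : Filter α)

/-- `last(α,β)`: `α` if `λ(α,β) < α`, and otherwise `min(im(tr(α,β)))`. -/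
def lastStep (C : Ordinal.{0} → Set Ordinal.{0}) (α β : Ordinal.{0}) : Ordinal.{0} :=
  if lamb C α β < α then α else sInf {x | ∃ i < rho2 C α β, Tr C α β i = x}

namespace Pr1FailAux

attribute [local instance] Classical.propDecidable

/-- the θ index ordinal -/
def Th (μ : Cardinal.{0}) : Ordinal.{0} := (μ.ord.cof).ord
/-- κ = μ⁺ as an ordinal -/
def Kd (μ : Cardinal.{0}) : Ordinal.{0} := (Order.succ μ).ord

variable (μ : Cardinal.{0}) (c : Ordinal.{0} → Ordinal.{0} → Ordinal.{0})
  (U : Ordinal.{0} → Ultrafilter Ordinal.{0})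
  (ν gm' : Ordinal.{0} → Ordinal.{0}) (gm : Ordinal.{0} → Ordinal.{0} → Ordinal.{0})

/-- the `U i`-majority color of `c α ·` -/
def tau (i α : Ordinal.{0}) : Ordinal.{0} :=
  if {β | c α β = 0} ∈ U i then 0 else 1

/-- the `U i`-majority value of `tau i ·` -/
def tcol (i : Ordinal.{0}) : Ordinal.{0} :=
  if {α | tau c U i α = 0} ∈ U i then 0 else 1

theorem tau_eq_or (i α : Ordinal) : tau c U i α = 0 ∨ tau c U i α = 1 := by
  unfold tau; split <;> simp

theorem tcol_eq_or (i : Ordinal) : tcol c U i = 0 ∨ tcol c U i = 1 := by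
  unfold tcol; split <;> simp

theorem tcol_mem (i : Ordinal) : {α | tau c U i α = tcol c U i} ∈ U i := by
  unfold tcol; split_ifs with h
  · exact h
  · have h' : {α | tau c U i α = 0}ᶜ ∈ U i := Ultrafilter.compl_mem_iff_notMem.2 h
    refine (U i).toFilter.mem_of_superset h' ?_
    intro α hα
    rcases tau_eq_or c U i α with h0 | h1
    · exact absurd h0 hα
    · exact h1

/-- The set from which the `δ`-th point of the construction is selected,
given the previously constructed points `p`. -/
def Tset (δ : Ordinal.{0}) (p : Ordinal.{0} → Ordinal.{0}) : Set Ordinal.{0} :=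
  {β | tau c U (δ % Th μ) β = tcol c U (δ % Th μ) ∧
    (∀ ζ < δ / Th μ, gm (δ / Th μ) ζ < ν (δ % Th μ) →
      ∀ j < Th μ, c (p (Th μ * ζ + j)) β = tau c U (δ % Th μ) (p (Th μ * ζ + j))) ∧
    β < Kd μ ∧ ∀ γ < δ, p γ < β}

/-- The recursively constructed sequence of points. -/
def hseq : Ordinal.{0} → Ordinal.{0} :=
  Ordinal.lt_wf.fix fun δ ih =>
    sInf (Tset μ c U ν gm δ (fun γ => if h : γ < δ then ih γ h else 0))

theorem enc_lt_of_index_lt {Θ ξ ξ' i i' : Ordinal} (hi : i < Θ) (h : ξ < ξ') :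
    Θ * ξ + i < Θ * ξ' + i' := by
  have h1 : Θ * ξ + i < Θ * Order.succ ξ := by
    rw [Ordinal.mul_succ]; exact (add_lt_add_iff_left _).2 hi
  have h2 : Θ * Order.succ ξ ≤ Θ * ξ' := mul_le_mul_right (Order.succ_le_iff.2 h) Θ
  exact lt_of_lt_of_le (lt_of_lt_of_le h1 h2) le_self_add

theorem enc_lt_bound {Θ ξ i K : Ordinal} (hi : i < Θ) (h : ξ < K) :
    Θ * ξ + i < Θ * K := by
  have h1 : Θ * ξ + i < Θ * Order.succ ξ := by
    rw [Ordinal.mul_succ]; exact (add_lt_add_iff_left _).2 hi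
  exact lt_of_lt_of_le h1 (mul_le_mul_right (Order.succ_le_iff.2 h) Θ)

theorem enc_div {Θ ξ i : Ordinal} (hΘ : Θ ≠ 0) (hi : i < Θ) : (Θ * ξ + i) / Θ = ξ := by
  rw [Ordinal.mul_add_div _ hΘ, Ordinal.div_eq_zero_of_lt hi, add_zero]

theorem enc_mod {Θ ξ i : Ordinal} (hi : i < Θ) : (Θ * ξ + i) % Θ = i := by
  rw [Ordinal.mul_add_mod_self, Ordinal.mod_eq_of_lt hi]

theorem enc_inner_lt {Θ ζ j δ : Ordinal} (hζ : ζ < δ / Θ) (hj : j < Θ) :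
    Θ * ζ + j < δ := by
  have h1 : Θ * ζ + j < Θ * (δ / Θ) :=
    (by rw [Ordinal.mul_succ]; exact (add_lt_add_iff_left _).2 hj :
        Θ * ζ + j < Θ * Order.succ ζ).trans_le
      (mul_le_mul_right (Order.succ_le_iff.2 hζ) Θ)
  calc Θ * ζ + j < Θ * (δ / Θ) := h1
    _ ≤ Θ * (δ / Θ) + δ % Θ := le_self_add
    _ = δ := Ordinal.div_add_mod δ Θ

theorem Tset_subset {δ : Ordinal} {p q : Ordinal → Ordinal}
    (h : ∀ γ < δ, p γ = q γ) : Tset μ c U ν gm δ p ⊆ Tset μ c U ν gm δ q := by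
  rintro β ⟨h1, h2, h3, h4⟩
  refine ⟨h1, fun ζ hζ hgm j hj => ?_, h3, fun γ hγ => ?_⟩
  · rw [← h _ (enc_inner_lt hζ hj)]; exact h2 ζ hζ hgm j hj
  · rw [← h γ hγ]; exact h4 γ hγ

theorem Tset_congr {δ : Ordinal} {p q : Ordinal → Ordinal}
    (h : ∀ γ < δ, p γ = q γ) : Tset μ c U ν gm δ p = Tset μ c U ν gm δ q :=
  subset_antisymm (Tset_subset μ c U ν gm h)
    (Tset_subset μ c U ν gm fun γ hγ => (h γ hγ).symm)

theorem hseq_eq (δ : Ordinal) :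
    hseq μ c U ν gm δ = sInf (Tset μ c U ν gm δ (hseq μ c U ν gm)) := by
  show Ordinal.lt_wf.fix _ δ = _
  rw [WellFounded.fix_eq]
  exact congrArg sInf (Tset_congr μ c U ν gm fun γ hγ => by rw [dif_pos hγ]; rfl)


theorem small_coIio {x : Ordinal} (hx : x < Kd μ) :
    #↥(Iio (Kd μ) \ (Iio (Kd μ) \ Iio x)) < Cardinal.lift.{1} (Order.succ μ) := by
  have hsub : Iio (Kd μ) \ (Iio (Kd μ) \ Iio x) ⊆ Iio x := by
    rintro y ⟨hy1, hy2⟩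
    by_contra hy
    exact hy2 ⟨hy1, hy⟩
  refine lt_of_le_of_lt (Cardinal.mk_le_mk_of_subset hsub) ?_
  rw [Ordinal.mk_Iio_ordinal]
  exact Cardinal.lift_lt.2 (Cardinal.lt_ord.1 hx)


theorem maj
    (hc2 : ∀ α β : Ordinal, α < β → β < Kd μ → c α β < (2:Cardinal).ord)
    (hUF : ∀ i < Th μ, ∀ s : Set Ordinal.{0},
      #↥(Iio (Kd μ) \ s) < Cardinal.lift.{1} (Order.succ μ) → s ∈ U i)
    (hinf : ℵ₀ ≤ μ)
    {i : Ordinal} (hi : i < Th μ) {α : Ordinal} (hα : α < Kd μ) :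
    {β | c α β = tau c U i α} ∈ U i := by
  have hKlim : Order.IsSuccLimit (Kd μ) := Cardinal.isSuccLimit_ord (hinf.trans (Order.le_succ μ))
  unfold tau
  split_ifs with h
  · exact h
  · have h' : {β | c α β = 0}ᶜ ∈ U i := Ultrafilter.compl_mem_iff_notMem.2 h
    have hα1 : α + 1 < Kd μ := by
      rw [Ordinal.add_one_eq_succ]; exact hKlim.succ_lt hα
    have hbig : (Iio (Kd μ) \ Iio (α + 1)) ∈ U i :=
      hUF i hi _ (small_coIio μ hα1)
    refine Filter.mem_of_superset (Filter.inter_mem h' hbig) ?_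
    rintro β ⟨hc0, hβK, hβge⟩
    have hαβ : α < β := by
      have h1 : α + 1 ≤ β := not_lt.1 (fun hc => hβge hc)
      have h2 : α < α + 1 := by
        rw [Ordinal.add_one_eq_succ]; exact Order.lt_succ α
      exact lt_of_lt_of_le h2 h1
    have hlt2 : c α β < 2 := by
      have := hc2 α β hαβ hβK
      rwa [Cardinal.ord_ofNat] at this
    have hle1 : c α β ≤ 1 := by
      have h21 : (2 : Ordinal) = Order.succ 1 := by
        rw [← Ordinal.add_one_eq_succ]; norm_num
      rw [h21] at hlt2
      exact Order.lt_succ_iff.1 hlt2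
    rcases Ordinal.le_one_iff.1 hle1 with h0 | h1
    · exact absurd h0 hc0
    · exact h1

theorem card_enc_le (hinf : ℵ₀ ≤ μ) (hθμ : μ.ord.cof ≤ μ)
    (hθinf : ℵ₀ ≤ μ.ord.cof) {δ : Ordinal} (hδ : δ < Th μ * Kd μ) :
    δ.card ≤ μ := by
  have hΘ0 : Th μ ≠ 0 := (Cardinal.isSuccLimit_ord hθinf).pos.ne'
  have hξ : δ / Th μ < Kd μ := (Ordinal.div_lt hΘ0).2 hδ
  have hξc : (δ / Th μ).card ≤ μ :=
    Order.lt_succ_iff.1 (Cardinal.lt_ord.1 hξ)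
  have hic : (δ % Th μ).card ≤ μ.ord.cof := by
    have := Ordinal.card_le_card (Ordinal.mod_lt δ hΘ0).le
    rwa [show (Th μ).card = μ.ord.cof from Cardinal.card_ord _] at this
  calc δ.card = (Th μ * (δ / Th μ) + δ % Th μ).card := by
        rw [Ordinal.div_add_mod]
    _ = (Th μ).card * (δ / Th μ).card + (δ % Th μ).card := by
        rw [Ordinal.card_add, Ordinal.card_mul]
    _ ≤ μ * μ + μ := by
        refine add_le_add (mul_le_mul' ?_ hξc) (hic.trans hθμ)
        rw [show (Th μ).card = μ.ord.cof from Cardinal.card_ord _]; exact hθμ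
    _ = μ := by rw [Cardinal.mul_eq_self hinf, Cardinal.add_eq_self hinf]

theorem invariant
    (hinf : ℵ₀ ≤ μ) (hθμ : μ.ord.cof ≤ μ) (hθinf : ℵ₀ ≤ μ.ord.cof)
    (hc2 : ∀ α β : Ordinal, α < β → β < Kd μ → c α β < (2:Cardinal).ord)
    (hν : ∀ i < Th μ, ν i < μ.ord)
    (hginj : ∀ ξ < Kd μ, ∀ ζ < ξ, ∀ ζ' < ξ, gm ξ ζ = gm ξ ζ' → ζ = ζ')
    (hUF : ∀ i < Th μ, ∀ s : Set Ordinal.{0},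
      #↥(Iio (Kd μ) \ s) < Cardinal.lift.{1} (Order.succ μ) → s ∈ U i)
    (hUC : ∀ i < Th μ, ∀ (ι : Type 1) (f : ι → Set Ordinal.{0}),
      Cardinal.mk ι ≤ Cardinal.lift.{1} (max (ν i).card μ.ord.cof) →
      (∀ x, f x ∈ U i) → (⋂ x, f x) ∈ U i) :
    ∀ δ < Th μ * Kd μ,
      hseq μ c U ν gm δ ∈ Tset μ c U ν gm δ (hseq μ c U ν gm) := by
  intro δ
  induction δ using Ordinal.induction with
  | h δ IH =>
  intro hδ
  have hΘ0 : Th μ ≠ 0 := (Cardinal.isSuccLimit_ord hθinf).pos.ne'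
  have hi : δ % Th μ < Th μ := Ordinal.mod_lt δ hΘ0
  have hξ : δ / Th μ < Kd μ := (Ordinal.div_lt hΘ0).2 hδ
  set hs := hseq μ c U ν gm with hhs
  have hmem : Tset μ c U ν gm δ hs ∈ U (δ % Th μ) := by
    -- component 1
    have hZ : {β | tau c U (δ % Th μ) β = tcol c U (δ % Th μ)} ∈ U (δ % Th μ) :=
      tcol_mem c U _
    -- component 3
    have hKset : Iio (Kd μ) ∈ U (δ % Th μ) := by
      refine hUF _ hi _ ?_
      rw [Set.diff_self]
      refine lt_of_lt_of_le ?_ (le_refl _)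
      rw [Cardinal.mk_emptyCollection]
      exact lt_of_lt_of_le Cardinal.aleph0_pos
        (Cardinal.aleph0_le_lift.2 (hinf.trans (Order.le_succ μ)))
    -- component 2
    have hD : {β | ∀ ζ < δ / Th μ, gm (δ / Th μ) ζ < ν (δ % Th μ) →
        ∀ j < Th μ, c (hs (Th μ * ζ + j)) β
          = tau c U (δ % Th μ) (hs (Th μ * ζ + j))} ∈ U (δ % Th μ) := by
      set P : Set Ordinal.{0} :=
        {ζ | ζ < δ / Th μ ∧ gm (δ / Th μ) ζ < ν (δ % Th μ)} with hP
      have hbase : ∀ x : ↥P × ↥(Iio (Th μ)),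
          {β | c (hs (Th μ * x.1.1 + x.2.1)) β
            = tau c U (δ % Th μ) (hs (Th μ * x.1.1 + x.2.1))} ∈ U (δ % Th μ) := by
        rintro ⟨⟨ζ, hζ⟩, ⟨j, hj⟩⟩
        have hlt : Th μ * ζ + j < δ := enc_inner_lt hζ.1 hj
        have hsK : hs (Th μ * ζ + j) < Kd μ :=
          (IH _ hlt (hlt.trans hδ)).2.2.1
        exact maj μ c U hc2 hUF hinf hi hsK
      have hcount : #(↥P × ↥(Iio (Th μ)))
          ≤ Cardinal.lift.{1} (max (ν (δ % Th μ)).card μ.ord.cof) := by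
        have h1 : #↥P ≤ Cardinal.lift.{1} (ν (δ % Th μ)).card := by
          have hemb : Function.Injective
              (fun x : ↥P => (⟨gm (δ / Th μ) x.1, x.2.2⟩ : ↥(Iio (ν (δ % Th μ))))) := by
            rintro ⟨x, hx⟩ ⟨y, hy⟩ hxy
            have : gm (δ / Th μ) x = gm (δ / Th μ) y := congrArg Subtype.val hxy
            exact Subtype.ext (hginj _ hξ _ hx.1 _ hy.1 this)
          have := Cardinal.mk_le_of_injective hemb
          rwa [Ordinal.mk_Iio_ordinal] at this
        have h2 : #↥(Iio (Th μ)) ≤ Cardinal.lift.{1} μ.ord.cof := by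
          rw [Ordinal.mk_Iio_ordinal,
            show (Th μ).card = μ.ord.cof from Cardinal.card_ord _]
        calc #(↥P × ↥(Iio (Th μ)))
            = #↥P * #↥(Iio (Th μ)) := by
              rw [Cardinal.mk_prod, Cardinal.lift_id, Cardinal.lift_id]
          _ ≤ Cardinal.lift.{1} (ν (δ % Th μ)).card * Cardinal.lift.{1} μ.ord.cof :=
              mul_le_mul' h1 h2
          _ ≤ Cardinal.lift.{1} (max (ν (δ % Th μ)).card μ.ord.cof)
              * Cardinal.lift.{1} (max (ν (δ % Th μ)).card μ.ord.cof) :=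
              mul_le_mul' (Cardinal.lift_le.2 (le_max_left _ _))
                (Cardinal.lift_le.2 (le_max_right _ _))
          _ = Cardinal.lift.{1} (max (ν (δ % Th μ)).card μ.ord.cof) := by
              rw [← Cardinal.lift_mul, Cardinal.mul_eq_self
                (le_trans hθinf (le_max_right _ _))]
      have hIcap := hUC _ hi _ _ hcount hbase
      refine Filter.mem_of_superset hIcap ?_
      intro β hβ ζ hζ hgm' j hj
      exact Set.mem_iInter.1 hβ ⟨⟨ζ, ⟨hζ, hgm'⟩⟩, ⟨j, hj⟩⟩
    -- component 4
    have hS4 : {β | ∀ γ < δ, hs γ < β} ∈ U (δ % Th μ) := by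
      set M := Ordinal.blsub.{0,0} δ (fun γ _ => hs γ) with hM
      have hMK : M < Kd μ := by
        refine Ordinal.blsub_lt_ord ?_ (fun γ hγ => (IH γ hγ (hγ.trans hδ)).2.2.1)
        rw [show (Kd μ).cof = Order.succ μ from (Cardinal.isRegular_succ hinf).cof_eq]
        exact Order.lt_succ_of_le (card_enc_le μ hinf hθμ hθinf hδ)
      have hbig : (Iio (Kd μ) \ Iio M) ∈ U (δ % Th μ) :=
        hUF _ hi _ (small_coIio μ hMK)
      refine Filter.mem_of_superset hbig ?_
      rintro β ⟨hβK, hβM⟩ γ hγ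
      exact lt_of_lt_of_le (Ordinal.lt_blsub _ γ hγ) (not_lt.1 hβM)
    refine Filter.mem_of_superset
      (Filter.inter_mem (Filter.inter_mem hZ hD) (Filter.inter_mem hKset hS4)) ?_
    rintro β ⟨⟨h1, h2⟩, h3, h4⟩
    exact ⟨h1, h2, h3, h4⟩
  rw [hhs, hseq_eq]
  exact csInf_mem (Ultrafilter.nonempty_of_mem hmem)


/-- The filter of subsets of `Iio κ` with small complement (extended to all of `Ordinal`). -/
def coFil (μ : Cardinal.{0}) (hinf : ℵ₀ ≤ μ) : Filter Ordinal.{0} where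
  sets := {s | #↥(Iio (Kd μ) \ s) < Cardinal.lift.{1} (Order.succ μ)}
  univ_sets := by
    simp only [Set.mem_setOf_eq, Set.diff_univ, Cardinal.mk_emptyCollection]
    exact lt_of_lt_of_le Cardinal.aleph0_pos
      (Cardinal.aleph0_le_lift.2 (hinf.trans (Order.le_succ μ)))
  sets_of_superset := by
    intro s t hs hsub
    exact lt_of_le_of_lt
      (Cardinal.mk_le_mk_of_subset (Set.diff_subset_diff_right hsub)) hs
  inter_sets := by
    intro s t hs ht
    simp only [Set.mem_setOf_eq, Set.diff_inter]
    exact lt_of_le_of_lt (Cardinal.mk_union_le _ _)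
      (Cardinal.add_lt_of_lt
        (Cardinal.aleph0_le_lift.2 (hinf.trans (Order.le_succ μ))) hs ht)

theorem mem_coFil {μ : Cardinal.{0}} {hinf : ℵ₀ ≤ μ} {s : Set Ordinal.{0}} :
    s ∈ coFil μ hinf ↔ #↥(Iio (Kd μ) \ s) < Cardinal.lift.{1} (Order.succ μ) :=
  Iff.rfl

theorem coFil_neBot (hinf : ℵ₀ ≤ μ) : (coFil μ hinf).NeBot := by
  refine Filter.neBot_iff.2 (fun hbot => ?_)
  have h1 : (∅ : Set Ordinal.{0}) ∈ coFil μ hinf := by rw [hbot]; exact Filter.mem_bot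
  rw [mem_coFil, Set.diff_empty, Ordinal.mk_Iio_ordinal] at h1
  rw [show (Kd μ).card = Order.succ μ from Cardinal.card_ord _] at h1
  exact lt_irrefl _ h1

theorem coFil_complete (hinf : ℵ₀ ≤ μ) :
    FilterComplete (Order.succ μ) (coFil μ hinf) := by
  intro ι hι f hf
  rw [mem_coFil, Set.diff_iInter]
  refine lt_of_le_of_lt Cardinal.mk_iUnion_le_sum_mk ?_
  refine Cardinal.sum_lt_of_isRegular ?_ hι (fun i => hf i)
  rw [Cardinal.lift_succ]
  exact Cardinal.isRegular_succ (Cardinal.aleph0_le_lift.2 hinf)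

theorem otp_image {f : Ordinal.{0} → Ordinal.{0}} {Θ : Ordinal.{0}}
    (hmono : StrictMonoOn f (Iio Θ)) :
    otp (f '' Iio Θ) = Ordinal.lift.{1} Θ := by
  have e : ↥(Iio Θ) ≃o ↥(f '' Iio Θ) := StrictMonoOn.orderIso f _ hmono
  have h1 : otp (f '' Iio Θ)
      = Ordinal.type ((· < ·) : ↥(Iio Θ) → ↥(Iio Θ) → Prop) :=
    Ordinal.type_eq.2 ⟨e.symm.toRelIsoLT⟩
  rw [h1]
  exact Ordinal.type_lt_Iio Θ

end Pr1FailAux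

/-- If `μ` is a singular limit of strongly compact cardinals,
then `Pr₁(μ⁺, μ⁺, 2, cf(μ)⁺)` fails. -/
theorem Pr1_fails_limit_of_strongly_compact (μ : Cardinal.{0})
    (hinf : ℵ₀ ≤ μ) (hsing : μ.ord.cof < μ)
    (hlim : ∀ θ < μ, ∃ lam : Cardinal, θ < lam ∧ lam < μ ∧ IsStronglyCompact lam) :
    ¬ Pr1 (Order.succ μ) 2 (Order.succ μ.ord.cof) := by
  classical
  open Pr1FailAux in
  intro hPr
  obtain ⟨c, hc2, hP⟩ := hPr
  have hθinf : ℵ₀ ≤ μ.ord.cof := Ordinal.aleph0_le_cof.2 (Cardinal.isSuccLimit_ord hinf)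
  have hθμ : μ.ord.cof ≤ μ := hsing.le
  have hΘlim : Order.IsSuccLimit (Th μ) := Cardinal.isSuccLimit_ord hθinf
  have hΘ0 : Th μ ≠ 0 := hΘlim.pos.ne'
  -- a fundamental sequence for μ.ord
  obtain ⟨fseq, hfseq⟩ := Ordinal.exists_fundamental_sequence μ.ord
  set ν : Ordinal.{0} → Ordinal.{0} :=
    fun i => if h : i < Th μ then fseq i h else 0 with hνdef
  have hνlt : ∀ i < Th μ, ν i < μ.ord := by
    intro i hi
    show (if h : i < Th μ then fseq i h else 0) < μ.ord
    rw [dif_pos hi]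
    exact (Ordinal.lt_blsub _ i hi).trans_eq hfseq.blsub_eq
  have hνunb : ∀ x < μ.ord, ∃ i, i < Th μ ∧ x < ν i := by
    intro x hx
    rw [← hfseq.blsub_eq] at hx
    obtain ⟨i, hi, hxf⟩ := Ordinal.lt_blsub_iff.1 hx
    have hisucc : Order.succ i < Th μ := hΘlim.succ_lt hi
    refine ⟨Order.succ i, hisucc, ?_⟩
    show x < (if h : Order.succ i < Th μ then fseq _ h else 0)
    rw [dif_pos hisucc]
    exact lt_of_le_of_lt hxf (hfseq.strict_mono hi hisucc (Order.lt_succ i))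
  -- covering injections
  have hgmex : ∀ ξ : Ordinal.{0}, ∃ g : Ordinal.{0} → Ordinal.{0}, ξ < Kd μ →
      (∀ ζ < ξ, g ζ < μ.ord) ∧ (∀ ζ < ξ, ∀ ζ' < ξ, g ζ = g ζ' → ζ = ζ') := by
    intro ξ
    by_cases hξ : ξ < Kd μ
    · have hle : #↥(Iio ξ) ≤ #↥(Iio μ.ord) := by
        rw [Ordinal.mk_Iio_ordinal, Ordinal.mk_Iio_ordinal, Cardinal.card_ord]
        exact Cardinal.lift_le.2 (Order.lt_succ_iff.1 (Cardinal.lt_ord.1 hξ))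
      obtain ⟨e⟩ := (Cardinal.le_def _ _).1 hle
      refine ⟨fun ζ => if h : ζ < ξ then (e ⟨ζ, h⟩).1 else 0, fun _ => ⟨?_, ?_⟩⟩
      · intro ζ hζ; simp only [dif_pos hζ]; exact (e ⟨ζ, hζ⟩).2
      · intro ζ hζ ζ' hζ' hgg
        simp only [dif_pos hζ, dif_pos hζ'] at hgg
        have := e.injective (Subtype.ext hgg)
        exact congrArg Subtype.val this
    · exact ⟨fun _ => 0, fun h => absurd h hξ⟩
  choose gm hgm using hgmex
  -- ultrafilters
  have hUex : ∀ i : Ordinal.{0}, ∃ V : Ultrafilter Ordinal.{0},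
      (∀ s : Set Ordinal.{0},
        #↥(Iio (Kd μ) \ s) < Cardinal.lift.{1} (Order.succ μ) → s ∈ V) ∧
      (i < Th μ → ∀ (ι : Type 1) (f : ι → Set Ordinal.{0}),
        Cardinal.mk ι ≤ Cardinal.lift.{1} (max (ν i).card μ.ord.cof) →
        (∀ x, f x ∈ V) → (⋂ x, f x) ∈ V) := by
    intro i
    by_cases hi : i < Th μ
    · have hmax : max (ν i).card μ.ord.cof < μ :=
        max_lt (Cardinal.lt_ord.1 (hνlt i hi)) hsing
      obtain ⟨lam, hlam1, hlam2, hsc⟩ := hlim _ hmax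
      have hcompl : FilterComplete lam (coFil μ hinf) := by
        intro ι hι f hf
        exact coFil_complete μ hinf ι
          (hι.trans_le (Cardinal.lift_le.2 (hlam2.le.trans (Order.le_succ μ)))) f hf
      obtain ⟨V, hVle, hVcomp⟩ :=
        hsc Ordinal.{0} (coFil μ hinf) (coFil_neBot μ hinf) hcompl
      refine ⟨V, fun s hs => ?_, fun _ ι f hι hf => ?_⟩
      · exact Filter.le_def.1 hVle s hs
      · exact hVcomp ι (lt_of_le_of_lt hι (Cardinal.lift_lt.2 hlam1)) f hf
    · haveI : (coFil μ hinf).NeBot := coFil_neBot μ hinf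
      exact ⟨Ultrafilter.of (coFil μ hinf),
        fun s hs => Filter.le_def.1 (Ultrafilter.of_le _) s hs,
        fun h => absurd h hi⟩
  choose U hUF' hUC' using hUex
  have hUF : ∀ i < Th μ, ∀ s : Set Ordinal.{0},
      #↥(Iio (Kd μ) \ s) < Cardinal.lift.{1} (Order.succ μ) → s ∈ U i :=
    fun i _ s hs => hUF' i s hs
  -- the invariant
  have hinv := invariant μ c U ν gm hinf hθμ hθinf hc2 hνlt
    (fun ξ hξ => (hgm ξ hξ).2) hUF (fun i hi => hUC' i hi)
  have hmono : ∀ {γ δ : Ordinal}, γ < δ → δ < Th μ * Kd μ →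
      hseq μ c U ν gm γ < hseq μ c U ν gm δ :=
    fun hγδ hδ => (hinv _ hδ).2.2.2 _ hγδ
  have hsK : ∀ {δ : Ordinal}, δ < Th μ * Kd μ → hseq μ c U ν gm δ < Kd μ :=
    fun hδ => (hinv _ hδ).2.2.1
  -- choice of the color τ*
  have hτex : ∃ τs : Ordinal, (τs = 0 ∨ τs = 1) ∧
      ∀ x < μ.ord, ∃ i, i < Th μ ∧ tcol c U i = τs ∧ x < ν i := by
    by_contra hcon
    push_neg at hcon
    obtain ⟨x0, hx0, hx0'⟩ := hcon 0 (Or.inl rfl)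
    obtain ⟨x1, hx1, hx1'⟩ := hcon 1 (Or.inr rfl)
    obtain ⟨i, hi, hxi⟩ := hνunb (max x0 x1) (max_lt hx0 hx1)
    rcases tcol_eq_or c U i with h0 | h1
    · exact absurd (lt_of_le_of_lt (le_max_left _ _) hxi) (not_lt.2 (hx0' i hi h0))
    · exact absurd (lt_of_le_of_lt (le_max_right _ _) hxi) (not_lt.2 (hx1' i hi h1))
  obtain ⟨τs, hτs01, hτsel⟩ := hτex
  set τ' : Ordinal := if τs = 0 then 1 else 0 with hτ'def
  -- the family
  set aSet : Ordinal.{0} → Set Ordinal.{0} :=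
    fun ξ => (fun j => hseq μ c U ν gm (Th μ * ξ + j)) '' (Iio (Th μ)) with haSet
  set A : Set (Set Ordinal.{0}) := aSet '' (Iio (Kd μ)) with hAdef
  have hsep : ∀ {ξ ξ' : Ordinal}, ξ < ξ' → ξ' < Kd μ →
      ∀ x ∈ aSet ξ, ∀ y ∈ aSet ξ', x < y := by
    intro ξ ξ' hlt hξ' x hx y hy
    obtain ⟨j, hj, rfl⟩ := hx
    obtain ⟨j', hj', rfl⟩ := hy
    exact hmono (enc_lt_of_index_lt hj hlt) (enc_lt_bound hj' hξ')
  have hsubK : ∀ {ξ : Ordinal}, ξ < Kd μ → aSet ξ ⊆ Iio (Kd μ) := by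
    intro ξ hξ x hx
    obtain ⟨j, hj, rfl⟩ := hx
    exact hsK (enc_lt_bound hj hξ)
  have hotp : ∀ {ξ : Ordinal}, ξ < Kd μ →
      otp (aSet ξ) = Ordinal.lift.{1} (Th μ) := by
    intro ξ hξ
    have hm : StrictMonoOn (fun j => hseq μ c U ν gm (Th μ * ξ + j)) (Iio (Th μ)) := by
      intro j hj j' hj' hjj
      exact hmono ((add_lt_add_iff_left _).2 hjj) (enc_lt_bound hj' hξ)
    exact otp_image hm
  have hfam : IsFamily (Kd μ) (Th μ) A := by
    constructor
    · rintro a ⟨ξ, hξ, rfl⟩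
      exact ⟨hsubK hξ, hotp hξ⟩
    · rintro a ⟨ξ, hξ, rfl⟩ b ⟨ξ', hξ', rfl⟩ hne
      have hdisj : ∀ {η η' : Ordinal}, η < η' → η' < Kd μ →
          Disjoint (aSet η) (aSet η') := by
        intro η η' h h'
        exact Set.disjoint_left.2 (fun {x} hx hx' => absurd (hsep h h' x hx x hx') (lt_irrefl x))
      rcases lt_trichotomy ξ ξ' with h | h | h
      · exact hdisj h hξ'
      · exact absurd (congrArg aSet h) hne
      · exact (hdisj h hξ).symm
  have hAcard : #↥A = Cardinal.lift.{1} (Order.succ μ) := by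
    have hinj : Set.InjOn aSet (Iio (Kd μ)) := by
      intro ξ hξ ξ' hξ' heq
      by_contra hne
      have hx0 : ∀ η : Ordinal, hseq μ c U ν gm (Th μ * η + 0) ∈ aSet η :=
        fun η => ⟨0, hΘlim.pos, rfl⟩
      rcases lt_or_gt_of_ne hne with h | h
      · exact absurd (hsep h hξ' _ (hx0 ξ) _ (heq ▸ hx0 ξ)) (lt_irrefl _)
      · exact absurd (hsep h hξ _ (hx0 ξ') _ (heq ▸ hx0 ξ')) (lt_irrefl _)
    rw [hAdef, Cardinal.mk_image_eq_of_injOn _ _ hinj, Ordinal.mk_Iio_ordinal,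
      show (Kd μ).card = Order.succ μ from Cardinal.card_ord _]
  have hσ : Th μ < (Order.succ μ.ord.cof).ord :=
    Cardinal.ord_lt_ord.2 (Order.lt_succ μ.ord.cof)
  have hτ'2 : τ' < (2 : Cardinal).ord := by
    rw [Cardinal.ord_ofNat, hτ'def]
    split_ifs <;> norm_num
  obtain ⟨a, ha, b, hb, hab, hmonoc⟩ := hP (Th μ) hσ A hfam hAcard τ' hτ'2
  obtain ⟨ξ, hξK, rfl⟩ := ha
  obtain ⟨ξ', hξ'K, rfl⟩ := hb
  have hx0 : ∀ η : Ordinal, hseq μ c U ν gm (Th μ * η + 0) ∈ aSet η :=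
    fun η => ⟨0, hΘlim.pos, rfl⟩
  have hlt : ξ < ξ' := by
    rcases lt_trichotomy ξ ξ' with h | h | h
    · exact h
    · subst h
      exact absurd (hab _ (hx0 ξ) _ (hx0 ξ)) (lt_irrefl _)
    · exact absurd ((hab _ (hx0 ξ) _ (hx0 ξ')).trans
        (hsep h hξK _ (hx0 ξ') _ (hx0 ξ))) (lt_irrefl _)
  -- find the good ultrafilter index
  obtain ⟨i, hiΘ, hti, hgν⟩ := hτsel (gm ξ' ξ) ((hgm ξ' hξ'K).1 ξ hlt)
  have hδ'lt : Th μ * ξ' + i < Th μ * Kd μ := enc_lt_bound hiΘ hξ'K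
  obtain ⟨hβ1, hβ2, hβ3, hβ4⟩ := hinv _ hδ'lt
  rw [enc_div hΘ0 hiΘ, enc_mod hiΘ] at hβ2
  have hcαβ : c (hseq μ c U ν gm (Th μ * ξ + i)) (hseq μ c U ν gm (Th μ * ξ' + i))
      = tau c U i (hseq μ c U ν gm (Th μ * ξ + i)) := hβ2 ξ hlt hgν i hiΘ
  have hαinv := (hinv (Th μ * ξ + i) (enc_lt_bound hiΘ hξK)).1
  rw [enc_mod hiΘ] at hαinv
  have hmema : hseq μ c U ν gm (Th μ * ξ + i) ∈ aSet ξ := ⟨i, hiΘ, rfl⟩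
  have hmemb : hseq μ c U ν gm (Th μ * ξ' + i) ∈ aSet ξ' := ⟨i, hiΘ, rfl⟩
  have hfin := hmonoc _ hmema _ hmemb
  rw [hcαβ, hαinv, hti] at hfin
  rcases hτs01 with rfl | rfl
  · rw [hτ'def] at hfin; simp at hfin
  · rw [hτ'def] at hfin; simp at hfin

end
end

section
/- For every infinite cardinal μ and every map d : <ω μ → 2, there exist i < 2 and families ⟨u_α | α < μ⟩, ⟨v_β | β < μ⟩ with: each u_α a singleton {ϱ} with α ∈ im(ϱ); each v_β a subset of <ω μ of size |β| all of whose elements have β in their image; such that for every pair α < β < μ there are ϱ ∈ u_α and σ ∈ v_β with d(ϱ⌢σ) ≠ i. In particular Pr₆(μ, μ, 2, μ) fails. -/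
open Cardinal Ordinal Set

noncomputable section

/-- For every infinite cardinal `μ` and every `d : <ω μ → 2`, there are
a color `i < 2` and families (with `u_α` singletons and `|v_β| = |β|`)
witnessing the failure of `d`; in particular `Pr₆(μ, μ, 2, μ)` fails. -/
theorem Pr6_fails (μ : Cardinal.{0}) (hinf : ℵ₀ ≤ μ) :
    (∀ d : List Ordinal.{0} → Fin 2,
      ∃ (i : Fin 2) (u v : Ordinal.{0} → Set (List Ordinal.{0})),
        (∀ α < μ.ord, ∃ ϱ : List Ordinal, u α = {ϱ} ∧ (∀ x ∈ ϱ, x < μ.ord) ∧ α ∈ ϱ) ∧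
        (∀ β < μ.ord, #(v β) = Cardinal.lift.{1} β.card ∧
          ∀ σl ∈ v β, (∀ x ∈ σl, x < μ.ord) ∧ β ∈ σl) ∧
        (∀ α β : Ordinal, α < β → β < μ.ord →
          ∃ ϱ ∈ u α, ∃ σl ∈ v β, d (ϱ ++ σl) ≠ i)) ∧
    ¬ Pr6 μ 2 μ := by
  have main : ∀ d : List Ordinal.{0} → Fin 2,
      ∃ (i : Fin 2) (u v : Ordinal.{0} → Set (List Ordinal.{0})),
        (∀ α < μ.ord, ∃ ϱ : List Ordinal, u α = {ϱ} ∧ (∀ x ∈ ϱ, x < μ.ord) ∧ α ∈ ϱ) ∧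
        (∀ β < μ.ord, #(v β) = Cardinal.lift.{1} β.card ∧
          ∀ σl ∈ v β, (∀ x ∈ σl, x < μ.ord) ∧ β ∈ σl) ∧
        (∀ α β : Ordinal, α < β → β < μ.ord →
          ∃ ϱ ∈ u α, ∃ σl ∈ v β, d (ϱ ++ σl) ≠ i) := by
    intro d
    by_cases hP : ∀ a b : Ordinal.{0}, a < μ.ord → b < μ.ord →
        ∃ w : List Ordinal.{0}, (∀ x ∈ w, x < μ.ord) ∧ d ([a, a] ++ w ++ [b]) = 0
    · -- Case A : color 1
      have hP' : ∀ a b : Ordinal.{0}, ∃ w : List Ordinal.{0}, (∀ x ∈ w, x < μ.ord) ∧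
          (a < μ.ord → b < μ.ord → d ([a, a] ++ w ++ [b]) = 0) := by
        intro a b
        by_cases h : a < μ.ord ∧ b < μ.ord
        · obtain ⟨w, h1, h2⟩ := hP a b h.1 h.2
          exact ⟨w, h1, fun _ _ => h2⟩
        · exact ⟨[], by simp, fun h1 h2 => absurd ⟨h1, h2⟩ h⟩
      choose w hw1 hw2 using hP'
      refine ⟨1, fun α => {[α]}, fun β => (fun x => x :: (w x β ++ [β])) '' Set.Iio β,
        ?_, ?_, ?_⟩
      · intro α hα
        exact ⟨[α], rfl, by simpa using hα, by simp⟩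
      · intro β hβ
        constructor
        · rw [Cardinal.mk_image_eq_of_injOn _ _ (fun x _ y _ h => by
            simpa using (List.cons.injEq _ _ _ _ ▸ congrArg id h).1)]
          exact Ordinal.mk_Iio_ordinal β
        · rintro σl ⟨x, hx, rfl⟩
          refine ⟨?_, by simp⟩
          intro y hy
          simp only [List.mem_cons, List.mem_append, List.mem_singleton,
            List.not_mem_nil, or_false] at hy
          rcases hy with rfl | hy | rfl
          · exact lt_trans hx hβ
          · exact hw1 _ β y hy
          · exact hβ
      · intro α β hαβ hβ
        refine ⟨[α], rfl, α :: (w α β ++ [β]), ⟨α, hαβ, rfl⟩, ?_⟩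
        have hz := hw2 α β (hαβ.trans hβ) hβ
        have heq : [α] ++ (α :: (w α β ++ [β])) = [α, α] ++ w α β ++ [β] := by simp
        rw [heq, hz]
        decide
    · -- Case B : color 0
      push_neg at hP
      obtain ⟨a₀, b₀, ha₀, hb₀, hB⟩ := hP
      refine ⟨0, fun α => {[a₀, a₀, α]}, fun β => (fun x => [x, β, b₀]) '' Set.Iio β,
        ?_, ?_, ?_⟩
      · intro α hα
        refine ⟨[a₀, a₀, α], rfl, ?_, by simp⟩
        intro y hy
        simp only [List.mem_cons, List.not_mem_nil, or_false] at hy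
        rcases hy with rfl | rfl | rfl
        exacts [ha₀, ha₀, hα]
      · intro β hβ
        constructor
        · rw [Cardinal.mk_image_eq_of_injOn _ _ (fun x _ y _ h => by
            simpa using (List.cons.injEq _ _ _ _ ▸ congrArg id h).1)]
          exact Ordinal.mk_Iio_ordinal β
        · rintro σl ⟨x, hx, rfl⟩
          refine ⟨?_, by simp⟩
          intro y hy
          simp only [List.mem_cons, List.not_mem_nil, or_false] at hy
          rcases hy with rfl | rfl | rfl
          exacts [lt_trans hx hβ, hβ, hb₀]
      · intro α β hαβ hβ
        refine ⟨[a₀, a₀, α], rfl, [α, β, b₀], ⟨α, hαβ, rfl⟩, ?_⟩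
        have heq : [a₀, a₀, α] ++ [α, β, b₀] = [a₀, a₀] ++ [α, α, β] ++ [b₀] := by simp
        rw [heq]
        have hw : ∀ x ∈ ([α, α, β] : List Ordinal), x < μ.ord := by
          intro y hy
          simp only [List.mem_cons, List.not_mem_nil, or_false] at hy
          rcases hy with rfl | rfl | rfl
          exacts [hαβ.trans hβ, hαβ.trans hβ, hβ]
        exact hB [α, α, β] hw
  refine ⟨main, ?_⟩
  rintro ⟨d, hdlt, hd⟩
  set d' : List Ordinal.{0} → Fin 2 := fun l => if d l = 0 then 0 else 1 with hd'
  obtain ⟨i, u, v, h1, h2, h3⟩ := main d'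
  have hord2 : (2 : Cardinal.{0}).ord = 2 := by simp
  have hωle : (Ordinal.omega0 : Ordinal) ≤ μ.ord := by
    rw [← Cardinal.ord_aleph0]; exact Cardinal.ord_le_ord.mpr hinf
  have hE : ClubIn (Set.Ioo 0 μ.ord) μ.ord := by
    refine ⟨fun x hx => hx.2, ?_, fun δ hδ h0 _ => ⟨h0, hδ⟩⟩
    intro α hα
    refine ⟨max α 1, ⟨lt_of_lt_of_le one_pos (le_max_right _ _), ?_⟩, le_max_left _ _⟩
    exact max_lt hα (lt_of_lt_of_le Ordinal.one_lt_omega0 hωle)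
  set τ : Ordinal.{0} := if i = 0 then 0 else 1 with hτdef
  have hτ : τ < (2 : Cardinal.{0}).ord := by
    rw [hord2, hτdef]
    split <;> simp
  have hu : ∀ α ∈ Set.Ioo (0:Ordinal) μ.ord, (u α).Nonempty ∧
      #(u α) < Cardinal.lift.{1} μ ∧
      ∀ ϱ ∈ u α, (∀ x ∈ ϱ, x < μ.ord) ∧ α ∈ ϱ := by
    intro α hα
    obtain ⟨ϱ, hu, hϱ1, hϱ2⟩ := h1 α hα.2
    rw [hu]
    refine ⟨⟨ϱ, rfl⟩, ?_, ?_⟩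
    · rw [Cardinal.mk_singleton]
      exact lt_of_lt_of_le Cardinal.one_lt_aleph0 (Cardinal.aleph0_le_lift.mpr hinf)
    · rintro _ rfl; exact ⟨hϱ1, hϱ2⟩
  have hv : ∀ β ∈ Set.Ioo (0:Ordinal) μ.ord, (v β).Nonempty ∧
      #(v β) < Cardinal.lift.{1} μ ∧
      ∀ σl ∈ v β, (∀ x ∈ σl, x < μ.ord) ∧ β ∈ σl := by
    intro β hβ
    obtain ⟨hcard, helem⟩ := h2 β hβ.2
    refine ⟨?_, ?_, helem⟩
    · rw [← Set.nonempty_coe_sort, ← Cardinal.mk_ne_zero_iff, hcard]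
      simp only [ne_eq, Cardinal.lift_eq_zero]
      rw [Ordinal.card_eq_zero]
      exact hβ.1.ne'
    · rw [hcard]
      exact Cardinal.lift_lt.mpr (Cardinal.lt_ord.mp hβ.2)

  obtain ⟨α, hα, β, hβ, hαβ, hall⟩ := hd τ hτ _ hE u v hu hv
  obtain ⟨ϱ, hϱ, σl, hσ, hne⟩ := h3 α β hαβ hβ.2
  have hdv := hall ϱ hϱ σl hσ
  apply hne
  rcases (by omega : i = 0 ∨ i = 1) with h | h
  · have h0 : d (ϱ ++ σl) = 0 := by rw [hdv, hτdef, h]; simp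
    simp [hd', h0, h]
  · have h0 : d (ϱ ++ σl) = 1 := by rw [hdv, hτdef, h]; simp
    simp [hd', h0, h]

end
end

section
/- For every singular cardinal μ, the principle Pℓ₆(μ⁺, μ) fails. -/
open Cardinal Ordinal Set

noncomputable section

/-- Auxiliary predicate for the refutation of `Pℓ₆(μ⁺, μ)` at a singular `μ`:
the ordinal `x` admits, relative to a prescribed set `E` of ordinals, a
"mass homogeneity witness" `y` below `κo`. -/
abbrev AuxGood (d : List Ordinal.{0} → ℕ) (κo : Ordinal.{0}) (E : Set Ordinal.{0})
    (x : Ordinal.{0}) : Prop :=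
  ∃ y, x < y ∧ y < κo ∧ d [x, y] = 1 ∧ ∀ c ∈ E, d [c, x, y] = 2

/-- For every singular cardinal `μ`, the principle `Pℓ₆(μ⁺, μ)` fails. -/
theorem Pl6_fails_at_successor_of_singular (μ : Cardinal.{0})
    (hinf : ℵ₀ ≤ μ) (hsing : μ.ord.cof < μ) :
    ¬ Pl6 (Order.succ μ) μ := by
  classical
  rintro ⟨d, hd⟩
  have hμκ : μ.ord < (Order.succ μ).ord := Cardinal.ord_lt_ord.mpr (Order.lt_succ μ)
  have hκpos : (0 : Ordinal) < (Order.succ μ).ord :=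
    lt_of_le_of_lt (zero_le (a := μ.ord)) hμκ
  have hωκ : Ordinal.omega0 < (Order.succ μ).ord := by
    have h1 : (ℵ₀ : Cardinal).ord ≤ μ.ord := Cardinal.ord_le_ord.mpr hinf
    have h2 := lt_of_le_of_lt h1 hμκ
    rwa [Cardinal.ord_aleph0] at h2
  have hliftℵ : ℵ₀ ≤ Cardinal.lift.{1} μ := Cardinal.aleph0_le_lift.mpr hinf
  have hlift1 : (1 : Cardinal.{1}) < Cardinal.lift.{1} μ :=
    lt_of_lt_of_le Cardinal.one_lt_aleph0 hliftℵ
  -- a short cofinal family in `μ.ord`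
  obtain ⟨ι, f, hlsub, hmkι⟩ := Ordinal.exists_lsub_cof μ.ord
  have hfi : ∀ i, f i < μ.ord := fun i => hlsub ▸ Ordinal.lt_lsub f i
  have hιne : Nonempty ι := by
    rw [← Cardinal.mk_ne_zero_iff (α := ι), hmkι, Ordinal.cof_ne_zero]
    intro h0
    have hcard := congrArg Ordinal.card h0
    rw [Cardinal.card_ord, Ordinal.card_zero] at hcard
    rw [hcard] at hinf
    exact absurd hinf (not_le.mpr Cardinal.aleph0_pos)
  -- surjections `μ.ord → x`
  have hex : ∀ x : Ordinal, ∃ e : Ordinal → Ordinal,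
      (∀ j, e j < (Order.succ μ).ord) ∧
        (x < (Order.succ μ).ord → ∀ c < x, ∃ j < μ.ord, e j = c) := by
    intro x
    by_cases hx : x < (Order.succ μ).ord ∧ 0 < x
    · obtain ⟨hxκ, -⟩ := hx
      have hcard : #(Set.Iio x) ≤ #(Set.Iio μ.ord) := by
        rw [Ordinal.mk_Iio_ordinal, Ordinal.mk_Iio_ordinal, Cardinal.lift_le,
          Cardinal.card_ord]
        exact Order.lt_succ_iff.mp (Cardinal.lt_ord.mp hxκ)
      obtain ⟨g⟩ := (Cardinal.le_def _ _).mp hcard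
      refine ⟨fun j => if h : ∃ c : Set.Iio x, ((g c : Set.Iio μ.ord) : Ordinal) = j then
          ((Classical.choose h : Set.Iio x) : Ordinal) else 0, fun j => ?_, fun _ c hc => ?_⟩
      · dsimp only
        split
        · next h => exact lt_trans (Classical.choose h).2 hxκ
        · exact hκpos
      · refine ⟨((g ⟨c, hc⟩ : Set.Iio μ.ord) : Ordinal), (g ⟨c, hc⟩).2, ?_⟩
        have hw : ∃ c' : Set.Iio x,
            ((g c' : Set.Iio μ.ord) : Ordinal) = ((g ⟨c, hc⟩ : Set.Iio μ.ord) : Ordinal) :=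
          ⟨⟨c, hc⟩, rfl⟩
        dsimp only
        rw [dif_pos hw]
        have hchoose : Classical.choose hw = (⟨c, hc⟩ : Set.Iio x) :=
          g.injective (Subtype.ext (Classical.choose_spec hw))
        rw [hchoose]
    · exact ⟨fun _ => 0, fun _ => hκpos, fun hxκ c hc =>
        absurd ⟨hxκ, lt_of_le_of_lt (zero_le (a := c)) hc⟩ hx⟩
  choose ex hex1 hex2 using hex
  -- the pieces `E x i := ex x '' Iio (f i + 1)` decompose `x` into small sets
  have hEκ : ∀ (x : Ordinal) (i : ι), ∀ c ∈ ex x '' Set.Iio (f i + 1),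
      c < (Order.succ μ).ord := by
    rintro x i c ⟨j, -, rfl⟩
    exact hex1 x j
  have hEmem : ∀ x : Ordinal, x < (Order.succ μ).ord → ∀ c, c < x →
      ∃ i : ι, c ∈ ex x '' Set.Iio (f i + 1) := by
    intro x hx c hc
    obtain ⟨j, hjμ, hj⟩ := hex2 x hx c hc
    obtain ⟨i, hi⟩ := Ordinal.lt_lsub_iff.mp (by rw [hlsub]; exact hjμ)
    refine ⟨i, ⟨j, ?_, hj⟩⟩
    rw [Set.mem_Iio, Ordinal.add_one_eq_succ]
    exact Order.lt_succ_iff.mpr hi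
  have hEcard : ∀ (x : Ordinal) (i : ι),
      #(ex x '' Set.Iio (f i + 1)) < Cardinal.lift.{1} μ := by
    intro x i
    have h1 : #(ex x '' Set.Iio (f i + 1)) ≤ #(Set.Iio (f i + 1)) := Cardinal.mk_image_le
    have h2 : #(Set.Iio (f i + 1)) = Cardinal.lift.{1} (f i + 1).card :=
      Ordinal.mk_Iio_ordinal _
    have h3 : (f i + 1).card < μ := by
      rw [Ordinal.add_one_eq_succ, Ordinal.card_succ]
      exact Cardinal.add_lt_of_lt hinf (Cardinal.lt_ord.mp (hfi i))
        (lt_of_lt_of_le Cardinal.one_lt_aleph0 hinf)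
    exact lt_of_le_of_lt (h1.trans_eq h2) (Cardinal.lift_lt.mpr h3)
  -- bad level and witnesses, via choice
  have hbiex : ∀ x : Ordinal, ∃ i : ι,
      ¬ (∀ i' : ι, AuxGood d (Order.succ μ).ord (ex x '' Set.Iio (f i' + 1)) x) →
        ¬ AuxGood d (Order.succ μ).ord (ex x '' Set.Iio (f i + 1)) x := by
    intro x
    by_cases h : ∀ i' : ι, AuxGood d (Order.succ μ).ord (ex x '' Set.Iio (f i' + 1)) x
    · exact ⟨hιne.some, fun h' => absurd h h'⟩
    · obtain ⟨i, hi⟩ := not_forall.mp h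
      exact ⟨i, fun _ => hi⟩
  choose bi hbi using hbiex
  have hwitex : ∀ (x : Ordinal) (i : ι), ∃ w : Ordinal,
      AuxGood d (Order.succ μ).ord (ex x '' Set.Iio (f i + 1)) x →
        x < w ∧ w < (Order.succ μ).ord ∧ d [x, w] = 1 ∧
          ∀ c ∈ ex x '' Set.Iio (f i + 1), d [c, x, w] = 2 := by
    intro x i
    by_cases h : AuxGood d (Order.succ μ).ord (ex x '' Set.Iio (f i + 1)) x
    · obtain ⟨w, h1, h2, h3, h4⟩ := h
      exact ⟨w, fun _ => ⟨h1, h2, h3, h4⟩⟩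
    · exact ⟨0, fun h' => absurd h' h⟩
  choose wit hwit using hwitex
  -- membership facts for the instance we are about to build
  have hmemU : ∀ γ : Ordinal, [γ] ∈
      (if ∀ i : ι, AuxGood d (Order.succ μ).ord (ex γ '' Set.Iio (f i + 1)) γ then
        ({[γ]} : Set (List Ordinal))
      else insert [γ] ((fun c => [c, γ]) '' (ex γ '' Set.Iio (f (bi γ) + 1)))) := by
    intro γ
    split
    · rfl
    · exact Set.mem_insert _ _
  have hmemU2 : ∀ γ : Ordinal,
      ¬ (∀ i : ι, AuxGood d (Order.succ μ).ord (ex γ '' Set.Iio (f i + 1)) γ) →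
      ∀ c ∈ ex γ '' Set.Iio (f (bi γ) + 1), [c, γ] ∈
      (if ∀ i : ι, AuxGood d (Order.succ μ).ord (ex γ '' Set.Iio (f i + 1)) γ then
        ({[γ]} : Set (List Ordinal))
      else insert [γ] ((fun c => [c, γ]) '' (ex γ '' Set.Iio (f (bi γ) + 1)))) := by
    intro γ h c hc
    rw [if_neg h]
    exact Set.mem_insert_of_mem _ ⟨c, hc, rfl⟩
  have hmemV1 : ∀ γ : Ordinal, [γ] ∈
      (if ∀ i : ι, AuxGood d (Order.succ μ).ord (ex γ '' Set.Iio (f i + 1)) γ then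
        insert [γ] (Set.range fun i : ι => [γ, wit γ i])
      else ({[γ]} : Set (List Ordinal))) := by
    intro γ
    split
    · exact Set.mem_insert _ _
    · rfl
  have hmemV2 : ∀ γ : Ordinal,
      (∀ i : ι, AuxGood d (Order.succ μ).ord (ex γ '' Set.Iio (f i + 1)) γ) →
      ∀ i : ι, [γ, wit γ i] ∈
      (if ∀ i : ι, AuxGood d (Order.succ μ).ord (ex γ '' Set.Iio (f i + 1)) γ then
        insert [γ] (Set.range fun i : ι => [γ, wit γ i])
      else ({[γ]} : Set (List Ordinal))) := by
    intro γ h i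
    rw [if_pos h]
    exact Set.mem_insert_of_mem _ ⟨i, rfl⟩
  -- apply `Pℓ₆` to the killer instance
  refine absurd (hd
      (fun x => if ∀ i : ι, AuxGood d (Order.succ μ).ord (ex x '' Set.Iio (f i + 1)) x then
        ({[x]} : Set (List Ordinal))
      else insert [x] ((fun c => [c, x]) '' (ex x '' Set.Iio (f (bi x) + 1))))
      (fun y => if ∀ i : ι, AuxGood d (Order.succ μ).ord (ex y '' Set.Iio (f i + 1)) y then
        insert [y] (Set.range fun i : ι => [y, wit y i])
      else ({[y]} : Set (List Ordinal)))
      (fun _ => ([] : List Ordinal))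
      (fun x => if ∀ i : ι, AuxGood d (Order.succ μ).ord (ex x '' Set.Iio (f i + 1)) x then
        (0 : Ordinal) else 1)
      ?_ ?_ ?_) ?_
  -- the map φ is eventually regressive
  · refine ⟨Ordinal.omega0, hωκ, fun a hω _ => ?_⟩
    have h1a : (1 : Ordinal) < a := lt_of_lt_of_le Ordinal.one_lt_omega0 hω
    split
    · exact lt_trans zero_lt_one h1a
    · exact h1a
  -- the hypothesis on u
  · intro a ha
    refine ⟨⟨[a], hmemU a⟩, ?_, ?_⟩
    · split
      · rw [Cardinal.mk_singleton]
        exact hlift1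
      · refine lt_of_le_of_lt Cardinal.mk_insert_le ?_
        refine Cardinal.add_lt_of_lt hliftℵ ?_ hlift1
        exact lt_of_le_of_lt Cardinal.mk_image_le (hEcard a (bi a))
    · intro ϱ hϱ
      split at hϱ
      · rw [Set.mem_singleton_iff] at hϱ
        subst hϱ
        refine ⟨fun x hx => ?_, by simp⟩
        rw [List.mem_singleton] at hx
        subst hx
        exact ha
      · rcases Set.mem_insert_iff.mp hϱ with h | h
        · subst h
          refine ⟨fun x hx => ?_, by simp⟩
          rw [List.mem_singleton] at hx
          subst hx
          exact ha
        · obtain ⟨c, hc, rfl⟩ := h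
          refine ⟨fun x hx => ?_, by simp⟩
          rcases List.mem_cons.mp hx with rfl | hx
          · exact hEκ a (bi a) _ hc
          · rw [List.mem_singleton] at hx
            subst hx
            exact ha
  -- the hypothesis on v
  · intro a ha
    refine ⟨⟨[a], hmemV1 a⟩, ?_, ?_⟩
    · split
      · next hGa =>
        refine lt_of_le_of_lt Cardinal.mk_insert_le ?_
        refine Cardinal.add_lt_of_lt hliftℵ ?_ hlift1
        have hr := Cardinal.mk_range_le_lift (f := fun i : ι => [a, wit a i])
        rw [Cardinal.lift_uzero] at hr
        refine lt_of_le_of_lt hr ?_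
        rw [hmkι]
        exact Cardinal.lift_lt.mpr hsing
      · rw [Cardinal.mk_singleton]
        exact hlift1
    · intro σl hσl
      split at hσl
      · next hGa =>
        rcases Set.mem_insert_iff.mp hσl with h | h
        · subst h
          refine ⟨fun x hx => ?_, ?_⟩
          · rw [List.mem_singleton] at hx
            subst hx
            exact ha
          · show ([] : List Ordinal) ++ [a] <+: [a]
            simp
        · obtain ⟨i, rfl⟩ := h
          refine ⟨fun x hx => ?_, ?_⟩
          · rcases List.mem_cons.mp hx with rfl | hx
            · exact ha
            · rw [List.mem_singleton] at hx
              subst hx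
              exact (hwit a i (hGa i)).2.1
          · show ([] : List Ordinal) ++ [a] <+: [a, wit a i]
            exact ⟨[wit a i], rfl⟩
      · rw [Set.mem_singleton_iff] at hσl
        subst hσl
        refine ⟨fun x hx => ?_, ?_⟩
        · rw [List.mem_singleton] at hx
          subst hx
          exact ha
        · show ([] : List Ordinal) ++ [a] <+: [a]
          simp
  -- no pair can be fully homogeneous
  · rintro ⟨α, β, hαβ, hβκ, hφeq, hcorr⟩
    by_cases hGα : ∀ i : ι, AuxGood d (Order.succ μ).ord (ex α '' Set.Iio (f i + 1)) α
    · -- both ordinals are good; use the mass witness at β to derive `1 = 2`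
      have hGβ : ∀ i : ι, AuxGood d (Order.succ μ).ord (ex β '' Set.Iio (f i + 1)) β := by
        by_contra hGβ
        rw [if_pos hGα, if_neg hGβ] at hφeq
        exact zero_ne_one hφeq
      obtain ⟨i, hi⟩ := hEmem β hβκ α hαβ
      obtain ⟨hw1, hw2, hw3, hw4⟩ := hwit β i (hGβ i)
      have h1 : d [α, β, wit β i] = 1 := by
        have h := hcorr [α] (hmemU α) [β, wit β i] (hmemV2 β hGβ i)
        simpa using h
      have h2 := hw4 α hi
      rw [h1] at h2
      exact absurd h2 (by norm_num)
    · -- α is bad at its chosen level; derive a defect from the u-side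
      have hni := hbi α hGα
      have e1 : d [α, β] = 1 := by
        have h := hcorr [α] (hmemU α) [β] (hmemV1 β)
        simpa using h
      have hnex : ∃ c ∈ ex α '' Set.Iio (f (bi α) + 1), d [c, α, β] ≠ 2 := by
        by_contra hall
        push_neg at hall
        exact hni ⟨β, hαβ, hβκ, e1, hall⟩
      obtain ⟨c, hc, hne⟩ := hnex
      have e2 : d [c, α, β] = 2 := by
        have h := hcorr [c, α] (hmemU2 α hGα c hc) [β] (hmemV1 β)
        simpa using h
      exact hne e2

end
end

section
/- Let κ be a regular uncountable cardinal and suppose Pr₁(κ, κ, θ, χ+χ) holds. Then Pr₁⁺(κ, θ, χ) holds: there is a coloring o : [κ]² → θ such that o(α,β) < α for all 0 < α < β < κ, and for all ζ < θ, σ < χ, and every pairwise disjoint family 𝒜 ⊆ [κ]^σ of size κ, there exists γ < κ such that for every b ∈ [κ∖γ]^σ there is some a ∈ 𝒜 with a ⊆ γ and o constantly equal to ζ on a × b. -/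
open Cardinal Ordinal Set

noncomputable section

/-! ### Auxiliary lemmas -/

lemma otp_card {s : Set Ordinal.{0}} {ρ : Ordinal.{0}} (h : otp s = Ordinal.lift.{1} ρ) :
    #s = Cardinal.lift.{1} ρ.card := by
  rw [← Ordinal.card_type ((· < ·) : s → s → Prop), ← otp, h]
  exact (Ordinal.lift_card ρ).symm

lemma otp_nonempty {s : Set Ordinal.{0}} (h : otp s ≠ 0) : s.Nonempty := by
  by_contra hs
  rw [Set.not_nonempty_iff_eq_empty] at hs
  subst hs
  exact h (by simp [otp, Ordinal.type_eq_zero_iff_isEmpty])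

lemma otp_union {a b : Set Ordinal.{0}} (h : SetLT a b) :
    otp (a ∪ b) = otp a + otp b := by
  classical
  have hd : Disjoint a b := by
    rw [Set.disjoint_left]
    intro x hxa hxb
    exact absurd (h x hxa x hxb) (lt_irrefl x)
  rw [otp, otp, otp, ← Ordinal.type_sum_lex ((· < ·) : a → a → Prop) ((· < ·) : b → b → Prop)]
  refine Ordinal.type_eq.2 ⟨?_⟩
  refine ⟨Equiv.Set.union hd, ?_⟩
  rintro ⟨x, hx⟩ ⟨y, hy⟩
  rcases hx with hx | hx <;> rcases hy with hy | hy
  · rw [Equiv.Set.union_apply_left (t := b) (a := ⟨x, Set.mem_union_left b hx⟩) hd hx,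
      Equiv.Set.union_apply_left (t := b) (a := ⟨y, Set.mem_union_left b hy⟩) hd hy]
    simp [Sum.lex_inl_inl]; exact Iff.rfl
  · rw [Equiv.Set.union_apply_left (t := b) (a := ⟨x, Set.mem_union_left b hx⟩) hd hx,
      Equiv.Set.union_apply_right (s := a) (a := ⟨y, Set.mem_union_right a hy⟩) hd hy]
    simp; exact h x hx y hy
  · rw [Equiv.Set.union_apply_right (s := a) (a := ⟨x, Set.mem_union_right a hx⟩) hd hx,
      Equiv.Set.union_apply_left (t := b) (a := ⟨y, Set.mem_union_left b hy⟩) hd hy]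
    simp [Sum.lex_inr_inl]; exact (h y hy x hx).le
  · rw [Equiv.Set.union_apply_right (s := a) (a := ⟨x, Set.mem_union_right a hx⟩) hd hx,
      Equiv.Set.union_apply_right (s := a) (a := ⟨y, Set.mem_union_right a hy⟩) hd hy]
    simp [Sum.lex_inr_inr]; exact Iff.rfl

lemma bounded_of_small {κ : Cardinal.{0}} (hreg : κ.IsRegular) {s : Set Ordinal.{0}}
    (hs : s ⊆ Set.Iio κ.ord) (hc : #s < Cardinal.lift.{1} κ) :
    ∃ γ, γ < κ.ord ∧ s ⊆ Set.Iio γ := by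
  obtain ⟨μ, hμ, hμ'⟩ := Cardinal.lt_lift_iff.1 hc
  obtain ⟨e⟩ : Nonempty (s ≃ μ.out) := by
    rw [← Cardinal.lift_mk_eq']
    rw [Cardinal.mk_out, Cardinal.lift_id'.{0,1}]
    exact hμ'.symm
  set f : μ.out → Ordinal.{0} := fun i => ((e.symm i : s) : Ordinal) with hf
  have hsup : iSup f < κ.ord := by
    apply Ordinal.iSup_lt_ord _ fun i => hs (e.symm i).2
    rwa [Cardinal.mk_out, hreg.cof_eq]
  refine ⟨iSup f + 1, ?_, ?_⟩
  · rw [Ordinal.add_one_eq_succ]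
    exact (Cardinal.isSuccLimit_ord hreg.aleph0_le).succ_lt hsup
  · intro x hx
    have : x ≤ iSup f := by
      have hfe : f (e ⟨x, hx⟩) = x := by simp [hf]
      rw [← hfe]
      exact Ordinal.le_iSup f _
    exact lt_of_le_of_lt this (by rw [Ordinal.add_one_eq_succ]; exact Order.lt_succ _)

/-- If `Pr₁(κ, κ, θ, χ+χ)` holds for a regular uncountable `κ`,
then `Pr₁⁺(κ, θ, χ)` holds. -/
theorem Pr1plus_of_Pr1 (κ θ χ : Cardinal.{0})
    (hreg : κ.IsRegular) (hκ : ℵ₀ < κ) (hθ : θ ≤ κ) (hχ : χ ≤ κ)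
    (h : Pr1 κ θ (χ + χ)) : Pr1plus κ θ χ := by
  obtain ⟨c, hc1, hc2⟩ := h
  have hℵ : ℵ₀ ≤ κ := hreg.aleph0_le
  have hlim : Order.IsSuccLimit κ.ord := Cardinal.isSuccLimit_ord hℵ
  have h1κ : (1 : Ordinal) < κ.ord := by
    calc (1 : Ordinal) < ω := Ordinal.one_lt_omega0
    _ ≤ κ.ord := by rw [← Cardinal.ord_aleph0]; exact Cardinal.ord_le_ord.2 hℵ
  have hθ0 : (0 : Ordinal) < θ.ord := (zero_le (a := c 0 1)).trans_lt (hc1 0 1 zero_lt_one h1κ)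
  set o : Ordinal → Ordinal → Ordinal := fun α β => if c α β < α then c α β else 0 with ho
  refine ⟨o, ?_, ?_⟩
  · intro α β hα hαβ hβ
    by_cases hcase : c α β < α
    · simp only [ho, if_pos hcase]
      exact ⟨hcase, hc1 α β hαβ hβ⟩
    · simp only [ho, if_neg hcase]
      exact ⟨hα, hθ0⟩
  intro ζ hζ σ hσ A hA hAcard
  have hκ1 : (1 : Cardinal.{1}) < Cardinal.lift.{1} κ := by
    have h1 : Cardinal.lift.{1,0} 1 < Cardinal.lift.{1,0} κ :=
      Cardinal.lift_lt.2 (Cardinal.one_lt_aleph0.trans_le hℵ)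
    rwa [Cardinal.lift_one] at h1
  rcases eq_or_ne σ 0 with rfl | hσ0
  · exfalso
    have hsub : A ⊆ {∅} := by
      intro a ha
      have h0 : otp a = 0 := by
        have := (hA.1 a ha).2
        rwa [Ordinal.lift_zero] at this
      have he : IsEmpty a := by
        rw [otp] at h0
        exact Ordinal.type_eq_zero_iff_isEmpty.1 h0
      exact Set.mem_singleton_iff.2 (Set.isEmpty_coe_sort.1 he)
    have hle : #A ≤ 1 := le_trans (Cardinal.mk_le_mk_of_subset hsub) (by simp)
    rw [hAcard] at hle
    exact absurd hle (not_le.2 hκ1)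
  have hσχ : σ.card < χ := Cardinal.lt_ord.1 hσ
  have hσκo : σ < κ.ord := hσ.trans_le (Cardinal.ord_le_ord.2 hχ)
  have hliftσ : Cardinal.lift.{1} σ.card < Cardinal.lift.{1} κ :=
    Cardinal.lift_lt.2 (Cardinal.lt_ord.1 hσκo)
  have hζκ : ζ < κ.ord := lt_of_lt_of_le hζ (Cardinal.ord_le_ord.2 hθ)
  -- a member of the family avoiding any bounded set
  have hApick : ∀ ε, ε < κ.ord → ∃ a, a ∈ A ∧ ∀ x ∈ a, ε ≤ x := by
    intro ε hε
    by_contra hcon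
    push_neg at hcon
    choose fx hfx1 hfx2 using hcon
    have hinj : Function.Injective (fun a : A => (⟨fx a.1 a.2, hfx2 a.1 a.2⟩ : Set.Iio ε)) := by
      intro a b hab
      simp only [Subtype.mk.injEq] at hab
      by_contra hne
      have hne' : a.1 ≠ b.1 := fun q => hne (Subtype.ext q)
      have hd := hA.2 a.2 b.2 hne'
      exact Set.disjoint_left.1 hd (hfx1 a.1 a.2) ((show fx a.1 a.2 = fx b.1 b.2 from congrArg Subtype.val hab) ▸ hfx1 b.1 b.2)
    have hle : #A ≤ #(Set.Iio ε) := Cardinal.mk_le_of_injective hinj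
    rw [hAcard, Ordinal.mk_Iio_ordinal] at hle
    exact absurd hle (not_le.2 (Cardinal.lift_lt.2 (Cardinal.lt_ord.1 hε)))
  choose! pickA hpick1 hpick2 using hApick
  have hbddall : ∀ s : Set Ordinal, (s ⊆ Set.Iio κ.ord ∧ #s < Cardinal.lift.{1} κ) →
      ∃ γ, γ < κ.ord ∧ s ⊆ Set.Iio γ := fun s hs => bounded_of_small hreg hs.1 hs.2
  choose! bnd hbnd1 hbnd2 using hbddall
  by_contra hbad
  push_neg at hbad
  choose! B hB1 hB2 hB3 hB4 using hbad
  -- recursive construction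
  obtain ⟨F, hFeq⟩ :
      ∃ F : Ordinal.{0} → Ordinal.{0} × Set Ordinal.{0} × Ordinal.{0} × Set Ordinal.{0} × Ordinal.{0},
        ∀ i, F i =
          (let ε := max (ζ + 1) ((Ordinal.bsup i fun j (_ : j < i) => (F j).2.2.2.2) + 1);
            (ε, pickA ε, bnd (pickA ε), B (bnd (pickA ε)),
              bnd (pickA ε ∪ B (bnd (pickA ε))))) := by
    refine ⟨Ordinal.lt_wf.fix (fun i IH =>
      let ε := max (ζ + 1) ((Ordinal.bsup i fun j hj => (IH j hj).2.2.2.2) + 1);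
      (ε, pickA ε, bnd (pickA ε), B (bnd (pickA ε)),
        bnd (pickA ε ∪ B (bnd (pickA ε))))), fun i => ?_⟩
    exact WellFounded.fix_eq _ _ i
  obtain ⟨eps, Ai, gam, Bi, bd, Heps, HAi, Hgam, HBi, Hbd⟩ :
      ∃ (eps : Ordinal.{0} → Ordinal.{0}) (Ai : Ordinal.{0} → Set Ordinal.{0})
        (gam : Ordinal.{0} → Ordinal.{0}) (Bi : Ordinal.{0} → Set Ordinal.{0})
        (bd : Ordinal.{0} → Ordinal.{0}),
        (∀ i, eps i = max (ζ + 1) ((Ordinal.bsup i fun j (_ : j < i) => bd j) + 1)) ∧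
        (∀ i, Ai i = pickA (eps i)) ∧ (∀ i, gam i = bnd (Ai i)) ∧
        (∀ i, Bi i = B (gam i)) ∧ (∀ i, bd i = bnd (Ai i ∪ Bi i)) := by
    refine ⟨fun i => (F i).1, fun i => (F i).2.1, fun i => (F i).2.2.1,
      fun i => (F i).2.2.2.1, fun i => (F i).2.2.2.2,
      fun i => ?_, fun i => ?_, fun i => ?_, fun i => ?_, fun i => ?_⟩ <;>
      (beta_reduce; rw [hFeq i])
  -- key invariant
  have key : ∀ i, i < κ.ord →
      (eps i < κ.ord ∧ bd i < κ.ord) ∧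
      (Ai i ∈ A ∧ (∀ x ∈ Ai i, eps i ≤ x) ∧ (∀ x ∈ Ai i, x < gam i) ∧ (Ai i).Nonempty) ∧
      (gam i < κ.ord ∧ (∀ x ∈ Bi i, gam i ≤ x) ∧ otp (Bi i) = Ordinal.lift.{1} σ ∧
        (∀ x ∈ Ai i ∪ Bi i, x < bd i) ∧
        (∀ a' ∈ A, a' ⊆ Set.Iio (gam i) → ∃ α ∈ a', ∃ β ∈ Bi i, o α β ≠ ζ)) := by
    intro i
    induction i using Ordinal.induction with
    | h i IH =>
    intro hi
    have hbsup : (Ordinal.bsup i fun j (_ : j < i) => bd j) < κ.ord := by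
      apply Ordinal.bsup_lt_ord
      · rw [hreg.cof_eq]; exact Cardinal.lt_ord.1 hi
      · exact fun j hj => ((IH j hj (hj.trans hi)).1).2
    have hepsi : eps i < κ.ord := by
      rw [Heps i]
      refine max_lt ?_ ?_
      · rw [Ordinal.add_one_eq_succ]; exact hlim.succ_lt hζκ
      · rw [Ordinal.add_one_eq_succ]; exact hlim.succ_lt hbsup
    have hAimem : Ai i ∈ A := by rw [HAi i]; exact hpick1 _ hepsi
    have hAige : ∀ x ∈ Ai i, eps i ≤ x := by rw [HAi i]; exact hpick2 _ hepsi
    obtain ⟨hAisub, hAiotp⟩ := hA.1 _ hAimem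
    have hAine : (Ai i).Nonempty := otp_nonempty (by
      rw [hAiotp]
      intro hq
      rw [← Ordinal.lift_zero.{0,1}] at hq
      exact hσ0 (Ordinal.lift_inj.{1,0}.1 hq))
    have hAicard : #(Ai i) = Cardinal.lift.{1} σ.card := otp_card hAiotp
    have hAismall : #(Ai i) < Cardinal.lift.{1} κ := by rw [hAicard]; exact hliftσ
    have hgami : gam i < κ.ord := by rw [Hgam i]; exact hbnd1 _ ⟨hAisub, hAismall⟩
    have hAilt : ∀ x ∈ Ai i, x < gam i := by
      rw [Hgam i]; exact fun x hx => hbnd2 _ ⟨hAisub, hAismall⟩ hx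
    have hBisub : Bi i ⊆ Set.Iio κ.ord := by rw [HBi i]; exact hB1 _ hgami
    have hBige : ∀ x ∈ Bi i, gam i ≤ x := by
      rw [HBi i]; exact fun x hx => hB2 _ hgami hx
    have hBiotp : otp (Bi i) = Ordinal.lift.{1} σ := by rw [HBi i]; exact hB3 _ hgami
    have hBibad : ∀ a' ∈ A, a' ⊆ Set.Iio (gam i) → ∃ α ∈ a', ∃ β ∈ Bi i, o α β ≠ ζ := by
      rw [HBi i]; exact fun a' ha' hsub => hB4 _ hgami a' ha' hsub
    have hUsub : Ai i ∪ Bi i ⊆ Set.Iio κ.ord := Set.union_subset hAisub hBisub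
    have hUsmall : #((Ai i ∪ Bi i : Set Ordinal.{0})) < Cardinal.lift.{1} κ := by
      apply lt_of_le_of_lt (Cardinal.mk_union_le _ _)
      rw [hAicard, otp_card hBiotp]
      exact Cardinal.add_lt_of_lt (Cardinal.aleph0_le_lift.2 hℵ) hliftσ hliftσ
    have hbdi : bd i < κ.ord := by rw [Hbd i]; exact hbnd1 _ ⟨hUsub, hUsmall⟩
    have hUlt : ∀ x ∈ Ai i ∪ Bi i, x < bd i := by
      rw [Hbd i]; exact fun x hx => hbnd2 _ ⟨hUsub, hUsmall⟩ hx
    exact ⟨⟨hepsi, hbdi⟩, ⟨hAimem, hAige, hAilt, hAine⟩,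
      ⟨hgami, hBige, hBiotp, hUlt, hBibad⟩⟩
  -- blocks are separated
  have hchain : ∀ j i, j < i → bd j < eps i := by
    intro j i hji
    rw [Heps i]
    refine lt_of_le_of_lt (Ordinal.le_bsup (fun j (_ : j < i) => bd j) j hji) (lt_of_lt_of_le ?_ (le_max_right _ _))
    rw [Ordinal.add_one_eq_succ]; exact Order.lt_succ _
  have hepsgam : ∀ i, i < κ.ord → eps i < gam i := by
    intro i hi
    obtain ⟨x, hx⟩ := (key i hi).2.1.2.2.2
    exact lt_of_le_of_lt ((key i hi).2.1.2.1 x hx) ((key i hi).2.1.2.2.1 x hx)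
  have hsep : ∀ j i, j < i → i < κ.ord → ∀ x ∈ Ai j ∪ Bi j, ∀ y ∈ Ai i ∪ Bi i, x < y := by
    intro j i hji hi x hx y hy
    have h1 : x < bd j := (key j (hji.trans hi)).2.2.2.2.2.1 x hx
    have h2 : eps i ≤ y := by
      rcases hy with hy | hy
      · exact (key i hi).2.1.2.1 y hy
      · exact le_trans (le_of_lt (hepsgam i hi)) ((key i hi).2.2.2.1 y hy)
    exact lt_of_lt_of_le (lt_of_lt_of_le h1 (le_of_lt (hchain j i hji))) h2
  -- the combined family
  have hσσ : σ + σ < (χ + χ).ord := by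
    rw [Cardinal.lt_ord, Ordinal.card_add]
    rcases lt_or_ge χ ℵ₀ with hfin | hinf
    · obtain ⟨n, hn⟩ := Cardinal.lt_aleph0.1 hfin
      obtain ⟨m, hm⟩ := Cardinal.lt_aleph0.1 (hσχ.trans hfin)
      have hmn : (m : Cardinal) < n := by rw [← hm, ← hn]; exact hσχ
      have hmn' : m < n := by exact_mod_cast hmn
      rw [hm, hn]
      exact_mod_cast Nat.add_lt_add hmn' hmn'
    · exact Cardinal.add_lt_of_lt (hinf.trans le_self_add)
        (hσχ.trans_le le_self_add) (hσχ.trans_le le_self_add)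
  have hfam : IsFamily κ.ord (σ + σ) ((fun i => Ai i ∪ Bi i) '' Set.Iio κ.ord) := by
    constructor
    · rintro s ⟨i, hi, rfl⟩
      refine ⟨fun x hx => lt_trans ((key i hi).2.2.2.2.2.1 x hx) (key i hi).1.2, ?_⟩
      have hslt : SetLT (Ai i) (Bi i) := fun α hα β hβ =>
        lt_of_lt_of_le ((key i hi).2.1.2.2.1 α hα) ((key i hi).2.2.2.1 β hβ)
      rw [otp_union hslt, (hA.1 _ (key i hi).2.1.1).2, (key i hi).2.2.2.2.1]
      exact (Ordinal.lift_add σ σ).symm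
    · rintro s ⟨i, hi, rfl⟩ t ⟨j, hj, rfl⟩ hst
      have hij : i ≠ j := fun hq => hst (by rw [hq])
      rcases hij.lt_or_gt with hij' | hij'
      · refine Set.disjoint_left.2 fun x hxs hxt => ?_
        exact absurd (hsep i j hij' hj x hxs x hxt) (lt_irrefl x)
      · refine Set.disjoint_left.2 fun x hxs hxt => ?_
        exact absurd (hsep j i hij' hi x hxt x hxs) (lt_irrefl x)
  have hinj : Set.InjOn (fun i => Ai i ∪ Bi i) (Set.Iio κ.ord) := by
    intro i hi j hj hij
    replace hij : Ai i ∪ Bi i = Ai j ∪ Bi j := hij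
    by_contra hne
    rcases Ne.lt_or_gt hne with h' | h'
    · obtain ⟨x, hx⟩ := (key i hi).2.1.2.2.2
      have hx1 : x ∈ Ai i ∪ Bi i := Or.inl hx
      have hx2 : x ∈ Ai j ∪ Bi j := hij ▸ hx1
      exact absurd (hsep i j h' hj x hx1 x hx2) (lt_irrefl x)
    · obtain ⟨x, hx⟩ := (key j hj).2.1.2.2.2
      have hx1 : x ∈ Ai j ∪ Bi j := Or.inl hx
      have hx2 : x ∈ Ai i ∪ Bi i := hij ▸ hx1
      exact absurd (hsep j i h' hi x hx1 x hx2) (lt_irrefl x)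
  have hA'card : #((fun i => Ai i ∪ Bi i) '' Set.Iio κ.ord) = Cardinal.lift.{1} κ := by
    rw [Cardinal.mk_image_eq_of_injOn _ _ hinj, Ordinal.mk_Iio_ordinal, Cardinal.card_ord]
  obtain ⟨x, hx, y, hy, hxy, hconst⟩ := hc2 (σ + σ) hσσ _ hfam hA'card ζ hζ
  obtain ⟨i, hi, rfl⟩ := hx
  obtain ⟨j, hj, rfl⟩ := hy
  have hij : i ≠ j := by
    rintro rfl
    obtain ⟨x, hx⟩ := (key i hi).2.1.2.2.2
    exact absurd (hxy x (Or.inl hx) x (Or.inl hx)) (lt_irrefl x)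
  have hij' : i < j := by
    rcases hij.lt_or_gt with h' | h'
    · exact h'
    · exfalso
      obtain ⟨x, hx⟩ := (key i hi).2.1.2.2.2
      obtain ⟨y, hy'⟩ := (key j hj).2.1.2.2.2
      exact absurd (hxy x (Or.inl hx) y (Or.inl hy'))
        (not_lt.2 (le_of_lt (hsep j i h' hi y (Or.inl hy') x (Or.inl hx))))
  have hsubγ : Ai i ⊆ Set.Iio (gam j) := by
    intro x hx
    have h1 : x < bd i := (key i hi).2.2.2.2.2.1 x (Or.inl hx)
    exact lt_trans (lt_trans h1 (hchain i j hij')) (hepsgam j hj)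
  obtain ⟨α, hα, β, hβ, hne⟩ := (key j hj).2.2.2.2.2.2 (Ai i) (key i hi).2.1.1 hsubγ
  apply hne
  have hcαβ : c α β = ζ := hconst α (Or.inl hα) β (Or.inr hβ)
  have hζε : ζ < eps i := by
    rw [Heps i]
    exact lt_of_lt_of_le (by rw [Ordinal.add_one_eq_succ]; exact Order.lt_succ ζ)
      (le_max_left _ _)
  have hζα : ζ < α := lt_of_lt_of_le hζε ((key i hi).2.1.2.1 α hα)
  simp only [ho]
  rw [if_pos (by rw [hcαβ]; exact hζα)]
  exact hcαβ

end
end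

section
/- Let μ be an infinite regular cardinal. Then there exists a sequence ⟨f_j | j < μ⟩ of functions from μ⁺ to μ⁺ such that for every pairwise disjoint family ℬ ⊆ [μ⁺]^{<μ} of size μ⁺ and every γ < μ⁺, there exist j < μ and b ∈ ℬ such that f_j takes the constant value γ on b. -/
open Cardinal Ordinal Set

noncomputable section

namespace GLem


/-- order type of a set of ordinals, as a small ordinal -/
noncomputable def otp0 (s : Set Ordinal.{0}) : Ordinal.{0} :=
  sInf {o | otp s ≤ Ordinal.lift.{1} o}

theorem otp_Iio (a : Ordinal.{0}) : otp (Set.Iio a) = Ordinal.lift.{1} a := by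
  rw [← typein_ordinal a]; rfl

theorem otp_mono {s t : Set Ordinal.{0}} (h : s ⊆ t) : otp s ≤ otp t :=
  type_le_iff'.2 ⟨⟨⟨fun x => ⟨x.1, h x.2⟩, fun a b hab => by
    ext; simpa using hab⟩, Iff.rfl⟩⟩

theorem card_otp (s : Set Ordinal.{0}) : (otp s).card = #s := card_type _

theorem lift_otp0 {s : Set Ordinal.{0}} {a : Ordinal.{0}} (h : s ⊆ Set.Iio a) :
    Ordinal.lift.{1} (otp0 s) = otp s := by
  have hne : {o : Ordinal.{0} | otp s ≤ Ordinal.lift.{1} o}.Nonempty :=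
    ⟨a, show otp s ≤ Ordinal.lift.{1} a from otp_Iio a ▸ otp_mono h⟩
  have hmem : otp s ≤ Ordinal.lift.{1} (otp0 s) := csInf_mem hne
  rcases lt_or_eq_of_le hmem with hlt | heq
  · exfalso
    obtain ⟨o', ho'⟩ := Ordinal.mem_range_lift_of_le hlt.le
    have hm : o' ∈ {o : Ordinal.{0} | otp s ≤ Ordinal.lift.{1} o} := le_of_eq ho'.symm
    have h2 : otp0 s ≤ o' := csInf_le (OrderBot.bddBelow _) hm
    have := Ordinal.lift_le.{1}.2 h2
    rw [ho'] at this
    exact absurd this (not_le.2 hlt)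
  · exact heq.symm

theorem otp0_card {s : Set Ordinal.{0}} {a : Ordinal.{0}} (h : s ⊆ Set.Iio a) :
    Cardinal.lift.{1} (otp0 s).card = #s := by
  rw [← card_otp, ← lift_otp0 h, ← Ordinal.lift_card]

theorem otp0_mono {s t : Set Ordinal.{0}} {a : Ordinal.{0}} (ht : t ⊆ Set.Iio a)
    (h : s ⊆ t) : otp0 s ≤ otp0 t := by
  rw [← Ordinal.lift_le.{1}, lift_otp0 (h.trans ht), lift_otp0 ht]
  exact otp_mono h

theorem otp0_Iio (a : Ordinal.{0}) : otp0 (Set.Iio a) = a := by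
  rw [← Ordinal.lift_inj.{1}, lift_otp0 (subset_refl _), otp_Iio]

/-- key strictness: initial segment cut at a member is strictly smaller -/
theorem otp_inter_Iio_lt {t : Set Ordinal.{0}} {x : Ordinal.{0}} (hx : x ∈ t) :
    otp (t ∩ Set.Iio x) < otp t := by
  have : otp (t ∩ Set.Iio x) = typein ((· < ·) : t → t → Prop) ⟨x, hx⟩ := by
    rw [← type_subrel ((· < ·) : t → t → Prop) ⟨x, hx⟩]
    refine (Ordinal.type_eq.2 ⟨RelIso.mk (Equiv.ofBijective
      (fun y => ⟨⟨y.1, y.2.1⟩, y.2.2⟩) ⟨?_, ?_⟩) ?_⟩)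
    · rintro ⟨y, hy⟩ ⟨z, hz⟩ hyz
      simpa using congrArg (fun w => (w.1 : Ordinal)) hyz
    · rintro ⟨⟨y, hy⟩, hyx⟩
      exact ⟨⟨y, hy, hyx⟩, rfl⟩
    · rintro ⟨y, hy⟩ ⟨z, hz⟩
      rfl
  rw [this]
  exact typein_lt_type _ _

theorem otp0_inter_Iio_lt {t : Set Ordinal.{0}} {x a : Ordinal.{0}} (hx : x ∈ t)
    (ht : t ⊆ Set.Iio a) : otp0 (t ∩ Set.Iio x) < otp0 t := by
  rw [← Ordinal.lift_lt.{1}, lift_otp0 ((inter_subset_left).trans ht), lift_otp0 ht]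
  exact otp_inter_Iio_lt hx

/-- strict monotonicity of ξ ↦ otp0 (t ∩ Iio ξ) on members of t -/
theorem otp0_cut_strictMono {t : Set Ordinal.{0}} {x y a : Ordinal.{0}} (hx : x ∈ t)
    (hxy : x < y) (ht : t ⊆ Set.Iio a) :
    otp0 (t ∩ Set.Iio x) < otp0 (t ∩ Set.Iio y) := by
  have h1 : t ∩ Set.Iio x = (t ∩ Set.Iio y) ∩ Set.Iio x := by
    ext z; constructor
    · exact fun hz => ⟨⟨hz.1, hz.2.trans hxy⟩, hz.2⟩
    · exact fun hz => ⟨hz.1.1, hz.2⟩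
  rw [h1]
  exact otp0_inter_Iio_lt ⟨hx, hxy⟩ ((inter_subset_left).trans ht)


theorem exists_Cseq (β : Ordinal.{0}) : ∃ c : Set Ordinal.{0},
    c ⊆ Set.Iio β ∧ (∀ ξ < β, ∃ η ∈ c, ξ ≤ η) ∧
    otp c = Ordinal.lift.{1} ((Ordinal.cof β).ord) := by
  have htype : Ordinal.type ((· < ·) : ↥(Set.Iio β) → ↥(Set.Iio β) → Prop)
      = Ordinal.lift.{1} β := by rw [← typein_ordinal β]; rfl
  obtain ⟨S, hSu, hSt⟩ := Ordinal.exists_ord_cof_eq (↥(Set.Iio β))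
  rw [← Ordinal.cof_type, htype, ← Ordinal.lift_cof, ← Cardinal.lift_ord] at hSt
  refine ⟨Subtype.val '' S, ?_, ?_, ?_⟩
  · rintro _ ⟨x, hx, rfl⟩; exact x.2
  · intro ξ hξ
    obtain ⟨b, hbS, hb⟩ := hSu ⟨ξ, hξ⟩
    refine ⟨(b : Ordinal), mem_image_of_mem _ hbS, ?_⟩
    exact hb
  · rw [← hSt]
    refine (Ordinal.type_eq.2 ⟨RelIso.mk (Equiv.ofBijective
      (fun x => ⟨x.1.1, mem_image_of_mem _ x.2⟩) ⟨?_, ?_⟩) ?_⟩).symm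
    · rintro ⟨⟨x, hx⟩, hxS⟩ ⟨⟨y, hy⟩, hyS⟩ hxy
      have hxy' : x = y := by
        have h2 := congrArg (fun w : ↥(Subtype.val '' S) => (w : Ordinal)) hxy
        simpa using h2
      subst hxy'; rfl
    · rintro ⟨_, ⟨⟨x, hx⟩, hxS, rfl⟩⟩
      exact ⟨⟨⟨x, hx⟩, hxS⟩, rfl⟩
    · rintro ⟨⟨x, hx⟩, hxS⟩ ⟨⟨y, hy⟩, hyS⟩
      rfl


variable (C : Ordinal.{0} → Set Ordinal.{0})

/-- next step of the walk from β down towards ξ -/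
def step (ξ β : Ordinal.{0}) : Ordinal.{0} := sInf (C β ∩ Set.Ici ξ ∩ Set.Iio β)

open scoped Classical in
noncomputable def rho (ξ : Ordinal.{0}) (β : Ordinal.{0}) : Ordinal.{0} :=
  if h : ξ < β ∧ (C β ∩ Set.Ici ξ ∩ Set.Iio β).Nonempty then
    max (otp0 (C β ∩ Set.Iio ξ)) (rho ξ (sInf (C β ∩ Set.Ici ξ ∩ Set.Iio β)))
  else 0
termination_by β
decreasing_by exact (csInf_mem h.2).2

theorem rho_of_not_lt {ξ β : Ordinal.{0}} (h : ¬ ξ < β) : rho C ξ β = 0 := by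
  unfold rho; rw [dif_neg]; tauto

theorem step_spec {ξ β : Ordinal.{0}} (hC1 : C β ⊆ Set.Iio β)
    (hC2 : ∀ ζ < β, ∃ η ∈ C β, ζ ≤ η) (hξβ : ξ < β) :
    step C ξ β ∈ C β ∧ ξ ≤ step C ξ β ∧ step C ξ β < β ∧
      (C β ∩ Set.Ici ξ ∩ Set.Iio β).Nonempty := by
  obtain ⟨η, hη, hξη⟩ := hC2 ξ hξβ
  have hne : (C β ∩ Set.Ici ξ ∩ Set.Iio β).Nonempty := ⟨η, ⟨hη, hξη⟩, hC1 hη⟩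
  have := csInf_mem hne
  exact ⟨this.1.1, this.1.2, this.2, hne⟩

theorem rho_eq {ξ β : Ordinal.{0}} (hC1 : C β ⊆ Set.Iio β)
    (hC2 : ∀ ζ < β, ∃ η ∈ C β, ζ ≤ η) (hξβ : ξ < β) :
    rho C ξ β = max (otp0 (C β ∩ Set.Iio ξ)) (rho C ξ (step C ξ β)) := by
  conv_lhs => unfold rho
  rw [dif_pos ⟨hξβ, (step_spec C hC1 hC2 hξβ).2.2.2⟩]
  rfl

theorem step_eq_self {ξ β : Ordinal.{0}} (hC1 : C β ⊆ Set.Iio β) (hξC : ξ ∈ C β) :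
    step C ξ β = ξ := by
  have hne : (C β ∩ Set.Ici ξ ∩ Set.Iio β).Nonempty :=
    ⟨ξ, ⟨hξC, Set.mem_Ici.2 le_rfl⟩, hC1 hξC⟩
  have hmem : ξ ∈ C β ∩ Set.Ici ξ ∩ Set.Iio β := ⟨⟨hξC, Set.mem_Ici.2 le_rfl⟩, hC1 hξC⟩
  exact le_antisymm (csInf_le (OrderBot.bddBelow _) hmem) (csInf_mem hne).1.2

theorem rho_mem {ξ β : Ordinal.{0}} (hC1 : C β ⊆ Set.Iio β)
    (hC2 : ∀ ζ < β, ∃ η ∈ C β, ζ ≤ η) (hξC : ξ ∈ C β) :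
    rho C ξ β = otp0 (C β ∩ Set.Iio ξ) := by
  rw [rho_eq C hC1 hC2 (hC1 hξC), step_eq_self C hC1 hξC,
    rho_of_not_lt C (lt_irrefl ξ), max_eq_left zero_le]


theorem isRegular_lift {μ : Cardinal.{0}} (h : μ.IsRegular) :
    (Cardinal.lift.{1} μ).IsRegular := by
  constructor
  · simpa using h.1
  · rw [← Cardinal.lift_ord, ← Ordinal.lift_cof]
    exact Cardinal.lift_le.2 h.2

theorem small_biUnion {μ : Cardinal.{0}} (hμ : μ.IsRegular) {H : Set Ordinal.{0}}
    {A : Ordinal.{0} → Set Ordinal.{0}} (hH : #H < Cardinal.lift.{1} μ)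
    (hA : ∀ η ∈ H, #(A η) < Cardinal.lift.{1} μ) :
    #(⋃ η ∈ H, A η) < Cardinal.lift.{1} μ := by
  have hreg := isRegular_lift hμ
  have h1 : #(⋃ η ∈ H, A η) ≤ #H * ⨆ η : H, #(A η) := Cardinal.mk_biUnion_le A H
  have hsup : (⨆ η : H, #(A η)) < Cardinal.lift.{1} μ :=
    Cardinal.iSup_lt_of_isRegular hreg hH fun i => hA i i.2
  exact h1.trans_lt (Cardinal.mul_lt_of_lt hreg.1 hH hsup)

theorem mk_Iic_lt {μ : Cardinal.{0}} (hμ : μ.IsRegular) {ν : Ordinal.{0}} (hν : ν < μ.ord) :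
    #(Set.Iic ν) < Cardinal.lift.{1} μ := by
  have h1 : (Set.Iic ν) = Set.Iio (Order.succ ν) := (Order.Iio_succ ν).symm
  rw [h1, Cardinal.mk_Iio_ordinal, Cardinal.lift_lt, ← Cardinal.lt_ord]
  exact (Cardinal.isSuccLimit_ord hμ.1).succ_lt hν

theorem union_lt {μ : Cardinal.{0}} (hμ : μ.IsRegular) {s t : Set Ordinal.{0}}
    (hs : #s < Cardinal.lift.{1} μ) (ht : #t < Cardinal.lift.{1} μ) :
    #(s ∪ t : Set Ordinal.{0}) < Cardinal.lift.{1} μ := by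
  refine (Cardinal.mk_union_le s t).trans_lt ?_
  exact Cardinal.add_lt_of_lt (isRegular_lift hμ).1 hs ht

theorem rho_small (C : Ordinal.{0} → Set Ordinal.{0}) (hC1 : ∀ β, C β ⊆ Set.Iio β)
    (hC2 : ∀ β, ∀ ζ < β, ∃ η ∈ C β, ζ ≤ η) {μ : Cardinal.{0}} (hμ : μ.IsRegular) :
    ∀ β, ∀ ν < μ.ord, #{ξ : Ordinal.{0} | ξ < β ∧ rho C ξ β ≤ ν} < Cardinal.lift.{1} μ := by
  intro β
  induction β using Ordinal.induction with
  | h β IH =>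
  intro ν hν
  set Hν : Set Ordinal.{0} := {η | η ∈ C β ∧ otp0 (C β ∩ Set.Iio η) ≤ ν} with hHν
  have hHcard : #Hν < Cardinal.lift.{1} μ := by
    have hmap : ∀ η : Hν, otp0 (C β ∩ Set.Iio η) ∈ Set.Iic ν := fun η => η.2.2
    have hinj : Function.Injective
        (fun η : Hν => (⟨otp0 (C β ∩ Set.Iio η), hmap η⟩ : Set.Iic ν)) := by
      rintro ⟨x, hx⟩ ⟨y, hy⟩ hxy
      have hval : otp0 (C β ∩ Set.Iio x) = otp0 (C β ∩ Set.Iio y) := by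
        simpa using congrArg (fun w : Set.Iic ν => (w : Ordinal)) hxy
      rcases lt_trichotomy x y with h | h | h
      · exact absurd hval (otp0_cut_strictMono hx.1 h (hC1 β)).ne
      · simpa using h
      · exact absurd hval.symm (otp0_cut_strictMono hy.1 h (hC1 β)).ne
    exact (Cardinal.mk_le_of_injective hinj).trans_lt (mk_Iic_lt hμ hν)
  have hsub : {ξ : Ordinal.{0} | ξ < β ∧ rho C ξ β ≤ ν} ⊆
      Hν ∪ ⋃ η ∈ Hν, {ξ : Ordinal.{0} | ξ < η ∧ rho C ξ η ≤ ν} := by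
    rintro ξ ⟨hξβ, hρ⟩
    rw [rho_eq C (hC1 β) (hC2 β) hξβ, max_le_iff] at hρ
    by_cases hmem : ξ ∈ C β
    · exact Or.inl ⟨hmem, hρ.1⟩
    · obtain ⟨hstC, hξst, hstβ, -⟩ := step_spec C (hC1 β) (hC2 β) hξβ
      have hlt : ξ < step C ξ β := lt_of_le_of_ne hξst (fun h => hmem (h ▸ hstC))
      have heqset : C β ∩ Set.Iio (step C ξ β) = C β ∩ Set.Iio ξ := by
        ext c
        constructor
        · rintro ⟨hc, hcst⟩
          refine ⟨hc, ?_⟩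
          by_contra hcξ
          have hcξ' : ξ ≤ c := not_lt.1 (fun hh => hcξ hh)
          have : step C ξ β ≤ c :=
            csInf_le (OrderBot.bddBelow _) ⟨⟨hc, Set.mem_Ici.2 hcξ'⟩, hC1 β hc⟩
          exact absurd hcst (not_lt.2 this)
        · rintro ⟨hc, hcξ⟩
          exact ⟨hc, hcξ.trans hlt⟩
      have hη : step C ξ β ∈ Hν := ⟨hstC, by rw [heqset]; exact hρ.1⟩
      refine Or.inr (Set.mem_biUnion hη ⟨hlt, hρ.2⟩)
  refine (Cardinal.mk_le_mk_of_subset hsub).trans_lt (union_lt hμ hHcard ?_)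
  exact small_biUnion hμ hHcard fun η hη => IH η (hC1 β hη.1) ν hν

theorem rho_coh (C : Ordinal.{0} → Set Ordinal.{0}) (hC1 : ∀ β, C β ⊆ Set.Iio β)
    (hC2 : ∀ β, ∀ ζ < β, ∃ η ∈ C β, ζ ≤ η) {μ : Cardinal.{0}} (hμ : μ.IsRegular)
    (κ : Ordinal.{0}) (hC3 : ∀ γ < κ, otp0 (C γ) ≤ μ.ord) :
    ∀ β' < κ, ∀ β < β',
      #{ξ : Ordinal.{0} | ξ < β ∧ rho C ξ β ≠ rho C ξ β'} < Cardinal.lift.{1} μ := by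
  intro β'
  induction β' using Ordinal.induction with
  | h β' IH =>
  intro hκ β hββ'
  have hβκ : β < κ := hββ'.trans hκ
  obtain ⟨hsC, hbs, hsb', -⟩ := step_spec C (hC1 β') (hC2 β') hββ'
  set η' : Ordinal.{0} := step C β β' with hη'def
  set E : Set Ordinal.{0} := C β' ∩ Set.Iio β with hE
  set t : Ordinal.{0} := otp0 E with ht
  have hEsub : E ⊆ Set.Iio β' := fun c hc => hC1 β' hc.1
  have hEsubβ : E ⊆ Set.Iio β := fun c hc => hc.2
  have htμ : t < μ.ord := by
    have h1 : E ⊆ C β' ∩ Set.Iio η' := fun c hc => ⟨hc.1, lt_of_lt_of_le hc.2 hbs⟩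
    have h2 : t ≤ otp0 (C β' ∩ Set.Iio η') :=
      otp0_mono (fun c hc => hC1 β' hc.1) h1
    have h3 : otp0 (C β' ∩ Set.Iio η') < otp0 (C β') := otp0_inter_Iio_lt hsC (hC1 β')
    exact lt_of_le_of_lt h2 (lt_of_lt_of_le h3 (hC3 β' hκ))
  have hEcard : #E < Cardinal.lift.{1} μ := by
    rw [← otp0_card hEsub, ← ht, Cardinal.lift_lt]
    exact (Cardinal.lt_ord).1 htμ
  -- the four exceptional sets
  set S2 : Set Ordinal.{0} := ⋃ η ∈ E, {ξ : Ordinal.{0} | ξ < η ∧ rho C ξ η ≠ rho C ξ β}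
    with hS2
  set S3 : Set Ordinal.{0} := {ξ : Ordinal.{0} | ξ < β ∧ rho C ξ β ≤ t} with hS3
  set S4 : Set Ordinal.{0} := {ξ : Ordinal.{0} | ξ < β ∧ rho C ξ β ≠ rho C ξ η'} with hS4
  have hS2card : #S2 < Cardinal.lift.{1} μ := by
    refine small_biUnion hμ hEcard fun η hη => ?_
    exact IH β hββ' hβκ η hη.2
  have hS3card : #S3 < Cardinal.lift.{1} μ := rho_small C hC1 hC2 hμ β t htμ
  have hS4card : #S4 < Cardinal.lift.{1} μ := by
    rcases eq_or_lt_of_le hbs with heq | hlt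
    · have : S4 = ∅ := by
        ext ξ; simp only [hS4, Set.mem_setOf_eq, Set.mem_empty_iff_false, iff_false]
        rintro ⟨-, hne⟩; exact hne (by rw [← heq])
      rw [this]
      simpa using (isRegular_lift hμ).pos
    · exact IH η' hsb' (hsb'.trans hκ) β hlt
  have hsub : {ξ : Ordinal.{0} | ξ < β ∧ rho C ξ β ≠ rho C ξ β'} ⊆ E ∪ S2 ∪ S3 ∪ S4 := by
    rintro ξ ⟨hξβ, hne⟩
    by_contra hS
    simp only [Set.mem_union, not_or] at hS
    obtain ⟨⟨⟨hnE, hnS2⟩, hnS3⟩, hnS4⟩ := hS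
    apply hne
    have hξβ' : ξ < β' := hξβ.trans hββ'
    obtain ⟨hsC2, hξs2, hs2β', -⟩ := step_spec C (hC1 β') (hC2 β') hξβ'
    set η : Ordinal.{0} := step C ξ β' with hηdef
    have hrw : rho C ξ β' = max (otp0 (C β' ∩ Set.Iio ξ)) (rho C ξ η) :=
      rho_eq C (hC1 β') (hC2 β') hξβ'
    have hsmall : otp0 (C β' ∩ Set.Iio ξ) ≤ t :=
      otp0_mono hEsub (fun c hc => ⟨hc.1, hc.2.trans hξβ⟩)
    have hρt : ¬ (rho C ξ β ≤ t) := fun hcon => hnS3 ⟨hξβ, hcon⟩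
    have hρη : rho C ξ η = rho C ξ β := by
      rcases lt_or_ge η β with hcase | hcase
      · -- η ∈ E
        have hηE : η ∈ E := ⟨hsC2, hcase⟩
        have hξη : ξ < η := lt_of_le_of_ne hξs2 (fun h => hnE (h ▸ hηE))
        by_contra hcon
        exact hnS2 (Set.mem_biUnion hηE ⟨hξη, hcon⟩)
      · -- η = η'
        have hηη' : η = η' := by
          have h1 : η' ≤ η := csInf_le (OrderBot.bddBelow _)
            ⟨⟨hsC2, Set.mem_Ici.2 hcase⟩, hs2β'⟩
          have h2 : η ≤ η' := csInf_le (OrderBot.bddBelow _)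
            ⟨⟨hsC, Set.mem_Ici.2 (hξβ.le.trans hbs)⟩, hsb'⟩
          exact le_antisymm h2 h1
        rcases eq_or_lt_of_le hbs with heq | hlt
        · rw [hηη', ← heq]
        · by_contra hcon
          exact hnS4 ⟨hξβ, fun h => hcon (by rw [hηη', ← h])⟩
    rw [hrw, hρη]
    exact (max_eq_right ((not_le.1 hρt).le.trans' hsmall)).symm
  refine (Cardinal.mk_le_mk_of_subset hsub).trans_lt ?_
  exact union_lt hμ (union_lt hμ (union_lt hμ hEcard hS2card) hS3card) hS4card

theorem rho_lt (C : Ordinal.{0} → Set Ordinal.{0}) (hC1 : ∀ β, C β ⊆ Set.Iio β)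
    (hC2 : ∀ β, ∀ ζ < β, ∃ η ∈ C β, ζ ≤ η) {μ : Cardinal.{0}} (hμ : μ.IsRegular)
    (κ : Ordinal.{0}) (hC3 : ∀ γ < κ, otp0 (C γ) ≤ μ.ord) :
    ∀ β < κ, ∀ ξ, rho C ξ β < μ.ord := by
  intro β
  induction β using Ordinal.induction with
  | h β IH =>
  intro hβκ ξ
  by_cases h : ξ < β
  · obtain ⟨hsC, hξs, hsβ, -⟩ := step_spec C (hC1 β) (hC2 β) h
    rw [rho_eq C (hC1 β) (hC2 β) h]
    refine max_lt ?_ (IH _ hsβ (hsβ.trans hβκ) ξ)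
    have h1 : C β ∩ Set.Iio ξ ⊆ C β ∩ Set.Iio (step C ξ β) := by
      rintro c ⟨hc1, hc2⟩
      exact ⟨hc1, hc2.trans_le hξs⟩
    have h2 : otp0 (C β ∩ Set.Iio ξ) ≤ otp0 (C β ∩ Set.Iio (step C ξ β)) :=
      otp0_mono (fun c hc => hC1 β hc.1) h1
    exact h2.trans_lt ((otp0_inter_Iio_lt hsC (hC1 β)).trans_le (hC3 β hβκ))
  · rw [rho_of_not_lt C h, Cardinal.lt_ord]
    simpa using hμ.pos

/-- count of earlier points with the same rho-value -/
noncomputable def cnt (C : Ordinal.{0} → Set Ordinal.{0}) (α β : Ordinal.{0}) :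
    Ordinal.{0} :=
  otp0 ({ξ : Ordinal.{0} | ξ < β ∧ rho C ξ β = rho C α β} ∩ Set.Iio α)

theorem cnt_lt (C : Ordinal.{0} → Set Ordinal.{0}) (hC1 : ∀ β, C β ⊆ Set.Iio β)
    (hC2 : ∀ β, ∀ ζ < β, ∃ η ∈ C β, ζ ≤ η) {μ : Cardinal.{0}} (hμ : μ.IsRegular)
    (κ : Ordinal.{0}) (hC3 : ∀ γ < κ, otp0 (C γ) ≤ μ.ord)
    {α β : Ordinal.{0}} (hβκ : β < κ) : cnt C α β < μ.ord := by
  set s : Set Ordinal.{0} := {ξ : Ordinal.{0} | ξ < β ∧ rho C ξ β = rho C α β} ∩ Set.Iio α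
    with hs
  have hbd : s ⊆ Set.Iio α := fun c hc => hc.2
  have hsub : s ⊆ {ξ : Ordinal.{0} | ξ < β ∧ rho C ξ β ≤ rho C α β} :=
    fun c hc => ⟨hc.1.1, le_of_eq hc.1.2⟩
  have h5 : Cardinal.lift.{1} (otp0 s).card < Cardinal.lift.{1} μ := by
    rw [otp0_card hbd]
    exact (Cardinal.mk_le_mk_of_subset hsub).trans_lt
      (rho_small C hC1 hC2 hμ β _ (rho_lt C hC1 hC2 hμ κ hC3 β hβκ α))
  have h6 : (otp0 s).card < μ := Cardinal.lift_lt.1 h5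
  exact Cardinal.lt_ord.2 h6

theorem e_inj (C : Ordinal.{0} → Set Ordinal.{0}) {α α' β : Ordinal.{0}}
    (hα : α < β) (hα' : α' < β) (hrho : rho C α β = rho C α' β)
    (hcnt : cnt C α β = cnt C α' β) : α = α' := by
  set fib : Set Ordinal.{0} := {ξ : Ordinal.{0} | ξ < β ∧ rho C ξ β = rho C α β} with hfib
  have hbd : fib ⊆ Set.Iio β := fun c hc => hc.1
  have hcnt' : otp0 (fib ∩ Set.Iio α) = otp0 (fib ∩ Set.Iio α') := by
    have : {ξ : Ordinal.{0} | ξ < β ∧ rho C ξ β = rho C α' β} = fib := by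
      rw [hfib, hrho]
    unfold cnt at hcnt
    rw [this] at hcnt
    exact hcnt
  rcases lt_trichotomy α α' with h | h | h
  · exact absurd hcnt'
      (otp0_cut_strictMono (show α ∈ fib from ⟨hα, rfl⟩) h hbd).ne
  · exact h
  · exact absurd hcnt'.symm
      (otp0_cut_strictMono (show α' ∈ fib from ⟨hα', hrho.symm⟩) h hbd).ne

theorem e_coh (C : Ordinal.{0} → Set Ordinal.{0}) (hC1 : ∀ β, C β ⊆ Set.Iio β)
    (hC2 : ∀ β, ∀ ζ < β, ∃ η ∈ C β, ζ ≤ η) {μ : Cardinal.{0}} (hμ : μ.IsRegular)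
    (κ : Ordinal.{0}) (hC3 : ∀ γ < κ, otp0 (C γ) ≤ μ.ord)
    {β β' : Ordinal.{0}} (hββ' : β < β') (hβ'κ : β' < κ) :
    #{α : Ordinal.{0} | α < β ∧
      (rho C α β ≠ rho C α β' ∨ cnt C α β ≠ cnt C α β')} < Cardinal.lift.{1} μ := by
  have hβκ : β < κ := hββ'.trans hβ'κ
  set D : Set Ordinal.{0} := {ξ : Ordinal.{0} | ξ < β ∧ rho C ξ β ≠ rho C ξ β'} with hD
  have hDcard : #D < Cardinal.lift.{1} μ := rho_coh C hC1 hC2 hμ κ hC3 β' hβ'κ β hββ'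
  set V : Set Ordinal.{0} :=
    ((fun ξ => rho C ξ β) '' D) ∪ ((fun ξ => rho C ξ β') '' D) with hV
  have hVcard : #V < Cardinal.lift.{1} μ :=
    union_lt hμ ((Cardinal.mk_image_le).trans_lt hDcard)
      ((Cardinal.mk_image_le).trans_lt hDcard)
  have hsub : {α : Ordinal.{0} | α < β ∧
      (rho C α β ≠ rho C α β' ∨ cnt C α β ≠ cnt C α β')} ⊆
      D ∪ ⋃ ν ∈ V, {ξ : Ordinal.{0} | ξ < β ∧ rho C ξ β = ν} := by
    rintro α ⟨hαβ, hbad⟩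
    by_cases hαD : α ∈ D
    · exact Or.inl hαD
    · have hrhoeq : rho C α β = rho C α β' := by
        by_contra hcon; exact hαD ⟨hαβ, hcon⟩
      right
      by_cases hνV : rho C α β ∈ V
      · exact Set.mem_biUnion hνV ⟨hαβ, rfl⟩
      · exfalso
        have hseteq : {ξ : Ordinal.{0} | ξ < β ∧ rho C ξ β = rho C α β} ∩ Set.Iio α =
            {ξ : Ordinal.{0} | ξ < β' ∧ rho C ξ β' = rho C α β'} ∩ Set.Iio α := by
          ext ξ
          simp only [Set.mem_inter_iff, Set.mem_setOf_eq, Set.mem_Iio]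
          constructor
          · rintro ⟨⟨hξβ, hξρ⟩, hξα⟩
            have hξnD : ξ ∉ D := by
              intro hc
              exact hνV (Or.inl ⟨ξ, hc, show rho C ξ β = rho C α β from hξρ⟩)
            have : rho C ξ β = rho C ξ β' := by
              by_contra hcon; exact hξnD ⟨hξβ, hcon⟩
            exact ⟨⟨hξβ.trans hββ', by rw [← this, hξρ, hrhoeq]⟩, hξα⟩
          · rintro ⟨⟨hξβ', hξρ⟩, hξα⟩
            have hξβ : ξ < β := hξα.trans hαβ
            have hξnD : ξ ∉ D := by
              intro hc
              exact hνV (Or.inr ⟨ξ, hc,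
                show rho C ξ β' = rho C α β by rw [hξρ, ← hrhoeq]⟩)
            have : rho C ξ β = rho C ξ β' := by
              by_contra hcon; exact hξnD ⟨hξβ, hcon⟩
            exact ⟨⟨hξβ, by rw [this, hξρ, ← hrhoeq]⟩, hξα⟩
        have hcnteq : cnt C α β = cnt C α β' := by
          unfold cnt
          rw [hseteq]
        rcases hbad with h | h
        · exact h hrhoeq
        · exact h hcnteq
  refine (Cardinal.mk_le_mk_of_subset hsub).trans_lt (union_lt hμ hDcard ?_)
  refine small_biUnion hμ hVcard fun ν hν => ?_
  have hνμ : ν < μ.ord := by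
    rcases hν with ⟨ξ, -, rfl⟩ | ⟨ξ, -, rfl⟩
    · exact rho_lt C hC1 hC2 hμ κ hC3 β hβκ ξ
    · exact rho_lt C hC1 hC2 hμ κ hC3 β' hβ'κ ξ
  have hsub2 : {ξ : Ordinal.{0} | ξ < β ∧ rho C ξ β = ν} ⊆
      {ξ : Ordinal.{0} | ξ < β ∧ rho C ξ β ≤ ν} := fun c hc => ⟨hc.1, le_of_eq hc.2⟩
  exact (Cardinal.mk_le_mk_of_subset hsub2).trans_lt (rho_small C hC1 hC2 hμ β ν hνμ)

theorem exists_pairing {μ : Cardinal.{0}} (hμ : ℵ₀ ≤ μ) :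
    ∃ π : Ordinal.{0} → Ordinal.{0} → Ordinal.{0},
      (∀ a b, a < μ.ord → b < μ.ord → π a b < μ.ord) ∧
      (∀ a b a' b', a < μ.ord → b < μ.ord → a' < μ.ord → b' < μ.ord →
        π a b = π a' b' → a = a' ∧ b = b') := by
  classical
  have hA : ℵ₀ ≤ #(↥(Set.Iio μ.ord)) := by
    rw [Cardinal.mk_Iio_ordinal, card_ord]
    simpa using hμ
  have h1 : #(↥(Set.Iio μ.ord) × ↥(Set.Iio μ.ord)) = #(↥(Set.Iio μ.ord)) := by
    simp only [Cardinal.mk_prod, Cardinal.lift_id]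
    exact Cardinal.mul_eq_self hA
  obtain ⟨F⟩ := Cardinal.eq.1 h1
  refine ⟨fun a b =>
    if h : a < μ.ord ∧ b < μ.ord then (F (⟨a, h.1⟩, ⟨b, h.2⟩) : Ordinal) else 0, ?_, ?_⟩
  · intro a b ha hb
    show (if h : a < μ.ord ∧ b < μ.ord then (F (⟨a, h.1⟩, ⟨b, h.2⟩) : Ordinal) else 0) < μ.ord
    rw [dif_pos ⟨ha, hb⟩]
    exact (F (⟨a, ha⟩, ⟨b, hb⟩)).2
  · intro a b a' b' ha hb ha' hb' heq
    have heq' : (if h : a < μ.ord ∧ b < μ.ord then (F (⟨a, h.1⟩, ⟨b, h.2⟩) : Ordinal) else 0)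
        = (if h : a' < μ.ord ∧ b' < μ.ord then (F (⟨a', h.1⟩, ⟨b', h.2⟩) : Ordinal) else 0) :=
      heq
    rw [dif_pos ⟨ha, hb⟩, dif_pos ⟨ha', hb'⟩] at heq' 
    have h2 := F.injective (Subtype.ext heq')
    obtain ⟨h3, h4⟩ := Prod.ext_iff.1 h2
    exact ⟨congrArg Subtype.val h3, congrArg Subtype.val h4⟩

theorem exists_bound {c : Cardinal.{0}} (hc : c.IsRegular) {T : Set Ordinal.{0}}
    (hT : T ⊆ Set.Iio c.ord) (hcard : #T < Cardinal.lift.{1} c) :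
    ∃ δ < c.ord, T ⊆ Set.Iio δ := by
  by_contra hcon
  push_neg at hcon
  simp only [Set.not_subset] at hcon
  have hub : IsCofinal {x : ↥(Set.Iio c.ord) | (x : Ordinal) ∈ T} := by
    intro a
    obtain ⟨α, hαT, hα⟩ := hcon a.1 a.2
    refine ⟨⟨α, hT hαT⟩, hαT, ?_⟩
    exact not_lt.1 fun hlt => hα (Set.mem_Iio.2 (Subtype.coe_lt_coe.2 hlt))
  have hle := Order.cof_le hub
  have htype : Ordinal.type ((· < ·) : ↥(Set.Iio c.ord) → ↥(Set.Iio c.ord) → Prop)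
      = Ordinal.lift.{1} c.ord := by rw [← typein_ordinal c.ord]; rfl
  rw [← Ordinal.cof_type, htype, ← Ordinal.lift_cof, hc.cof_ord] at hle
  have hmk : #{x : ↥(Set.Iio c.ord) | (x : Ordinal) ∈ T} = #T := by
    refine Cardinal.mk_congr ⟨fun x => ⟨x.1.1, x.2⟩, fun y => ⟨⟨y.1, hT y.2⟩, y.2⟩, ?_, ?_⟩
    · rintro ⟨⟨x, hx⟩, hx2⟩; rfl
    · rintro ⟨y, hy⟩; rfl
  rw [hmk] at hle
  exact absurd hcard (not_lt.2 hle)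

theorem grouping_main (μ : Cardinal.{0}) (hreg : μ.IsRegular) :
    ∃ f : Ordinal.{0} → Ordinal.{0} → Ordinal.{0},
      (∀ j < μ.ord, ∀ β < (Order.succ μ).ord, f j β < (Order.succ μ).ord) ∧
      ∀ B : Set (Set Ordinal),
        (∀ b ∈ B, b ⊆ Set.Iio (Order.succ μ).ord ∧ (otp b).card < Cardinal.lift.{1} μ) →
        B.PairwiseDisjoint id → #B = Cardinal.lift.{1} (Order.succ μ) →
        ∀ γ < (Order.succ μ).ord, ∃ j < μ.ord, ∃ b ∈ B, ∀ β ∈ b, f j β = γ := by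
  classical
  set κ : Ordinal.{0} := (Order.succ μ).ord with hκdef
  have hsucc : (Order.succ μ).IsRegular := Cardinal.isRegular_succ hreg.1
  have hS : ℵ₀ ≤ Order.succ μ := hsucc.1
  -- the C-sequence
  choose C hC1 hC2 hotp using exists_Cseq
  have hC3 : ∀ ζ < κ, otp0 (C ζ) ≤ μ.ord := by
    intro ζ hζ
    have h1 : Ordinal.lift.{1} (otp0 (C ζ)) = Ordinal.lift.{1} ((Ordinal.cof ζ).ord) := by
      rw [lift_otp0 (hC1 ζ), hotp ζ]
    rw [Ordinal.lift_inj.1 h1]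
    have h3 : Ordinal.cof ζ ≤ ζ.card := Ordinal.cof_le_card ζ
    have h4 : ζ.card < Order.succ μ := Cardinal.lt_ord.1 hζ
    exact Cardinal.ord_le_ord.2 (h3.trans (Order.lt_succ_iff.1 h4))
  -- pairing function
  obtain ⟨π, hπlt, hπinj⟩ := exists_pairing hreg.1
  -- the function g with large fibers
  have hAκ : ℵ₀ ≤ #(↥(Set.Iio κ)) := by
    rw [Cardinal.mk_Iio_ordinal, card_ord]
    have h0 := Cardinal.lift_le.{1}.2 hS
    simpa using h0
  have h1 : #(↥(Set.Iio κ) × ↥(Set.Iio κ)) = #(↥(Set.Iio κ)) := by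
    simp only [Cardinal.mk_prod, Cardinal.lift_id]
    exact Cardinal.mul_eq_self hAκ
  obtain ⟨G⟩ := Cardinal.eq.1 h1
  set g : Ordinal.{0} → Ordinal.{0} := fun α =>
    if h : α < κ then ((G.symm ⟨α, h⟩).2 : Ordinal) else 0 with hg
  have hκpos : (0 : Ordinal) < κ := Cardinal.lt_ord.2 (by simpa using hsucc.pos)
  have hglt : ∀ α, g α < κ := by
    intro α
    rw [hg]
    dsimp only
    split
    · exact ((G.symm ⟨α, _⟩).2).2
    · exact hκpos
  set e : Ordinal.{0} → Ordinal.{0} → Ordinal.{0} :=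
    fun β α => π (rho C α β) (cnt C α β) with he
  set f : Ordinal.{0} → Ordinal.{0} → Ordinal.{0} := fun j β =>
    if h : ∃ α, α < β ∧ e β α = j then g h.choose else 0 with hf
  have hflt : ∀ j β, f j β < κ := by
    intro j β
    rw [hf]
    dsimp only
    split
    · exact hglt _
    · exact hκpos
  refine ⟨f, fun j _ β _ => hflt j β, ?_⟩
  intro B hB hdisj hBcard γ hγ
  have hμ0 : (0 : Ordinal) < μ.ord := Cardinal.lt_ord.2 (by simpa using hreg.pos)
  by_cases hempty : ∅ ∈ B
  · exact ⟨0, hμ0, ∅, hempty, fun β hβ => absurd hβ (Set.notMem_empty β)⟩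
  -- a μ-sized bounded subset of the fiber of g over γ
  set Fib : Set Ordinal.{0} := {α : Ordinal.{0} | α < κ ∧ g α = γ} with hFib
  have hFibge : Cardinal.lift.{1} μ ≤ #(↥Fib) := by
    have hι : ∀ x : ↥(Set.Iio κ), ((G (x, ⟨γ, hγ⟩)) : Ordinal) ∈ Fib := by
      intro x
      have hmem := (G (x, ⟨γ, hγ⟩)).2
      refine ⟨hmem, ?_⟩
      rw [hg]
      dsimp only
      rw [dif_pos (show ((G (x, ⟨γ, hγ⟩)) : Ordinal) < κ from hmem)]
      have hxe : (⟨((G (x, ⟨γ, hγ⟩)) : Ordinal), hmem⟩ : ↥(Set.Iio κ)) = G (x, ⟨γ, hγ⟩) :=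
        Subtype.ext rfl
      rw [hxe, Equiv.symm_apply_apply]
    have hinj : Function.Injective (fun x : ↥(Set.Iio κ) =>
        (⟨((G (x, ⟨γ, hγ⟩)) : Ordinal), hι x⟩ : ↥Fib)) := by
      intro x y hxy
      have hval : ((G (x, ⟨γ, hγ⟩)) : Ordinal) = ((G (y, ⟨γ, hγ⟩)) : Ordinal) :=
        congrArg (fun w : ↥Fib => (w : Ordinal)) hxy
      have h5 := G.injective (Subtype.ext hval)
      exact congrArg Prod.fst h5
    have h2 : #(↥(Set.Iio κ)) ≤ #(↥Fib) := Cardinal.mk_le_of_injective hinj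
    refine le_trans ?_ h2
    rw [Cardinal.mk_Iio_ordinal, card_ord]
    exact Cardinal.lift_le.2 (Order.le_succ μ)
  obtain ⟨T, hTFib, hTcard⟩ := Cardinal.le_mk_iff_exists_subset.1 hFibge
  have hTκ : T ⊆ Set.Iio κ := fun x hx => (hTFib hx).1
  obtain ⟨δ, hδκ, hTδ⟩ := exists_bound hsucc hTκ
    (by rw [hTcard]; exact Cardinal.lift_lt.2 (Order.lt_succ μ))
  have hδcard : δ.card ≤ μ := Order.lt_succ_iff.1 (Cardinal.lt_ord.1 hδκ)
  -- find b ∈ B avoiding Iio δ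
  have hbex : ∃ b ∈ B, b ∩ Set.Iio δ = ∅ := by
    by_contra hcon
    push_neg at hcon
    have hch : ∀ b : ↥B, ∃ x, x ∈ (b : Set Ordinal) ∩ Set.Iio δ :=
      fun b => hcon b b.2
    choose φ hφ using hch
    have hinj : Function.Injective (fun b : ↥B => (⟨φ b, (hφ b).2⟩ : ↥(Set.Iio δ))) := by
      intro b b' hbb'
      have hval : φ b = φ b' := congrArg Subtype.val hbb'
      by_contra hne
      have hbne : (b : Set Ordinal) ≠ (b' : Set Ordinal) :=
        fun hc => hne (Subtype.ext hc)
      have hdis := hdisj b.2 b'.2 hbne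
      exact (Set.disjoint_left.1 hdis) (hφ b).1 (hval ▸ (hφ b').1)
    have h2 : #(↥B) ≤ #(↥(Set.Iio δ)) := Cardinal.mk_le_of_injective hinj
    rw [hBcard, Cardinal.mk_Iio_ordinal] at h2
    have h3 : Order.succ μ ≤ δ.card := Cardinal.lift_le.1 h2
    exact absurd (h3.trans hδcard) (not_le.2 (Order.lt_succ μ))
  obtain ⟨b, hbB, hbδ⟩ := hbex
  have hbκ : b ⊆ Set.Iio κ := (hB b hbB).1
  have hbcard : #(↥b) < Cardinal.lift.{1} μ := by
    have h2 := (hB b hbB).2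
    rwa [card_otp] at h2
  have hbIci : ∀ β ∈ b, δ ≤ β := by
    intro β hβ
    by_contra hc
    have : β ∈ b ∩ Set.Iio δ := ⟨hβ, not_le.1 hc⟩
    rw [hbδ] at this
    exact this
  rcases Set.eq_empty_or_nonempty b with hbe | ⟨β₀, hβ₀⟩
  · exact absurd (hbe ▸ hbB) hempty
  -- bad set
  set Bad : Ordinal.{0} → Ordinal.{0} → Set Ordinal.{0} := fun β β' =>
    {α : Ordinal.{0} | α < min β β' ∧
      (rho C α β ≠ rho C α β' ∨ cnt C α β ≠ cnt C α β')} with hBad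
  have hBadcard : ∀ β ∈ b, ∀ β' ∈ b, #(Bad β β') < Cardinal.lift.{1} μ := by
    intro β hβ β' hβ'
    rcases lt_trichotomy β β' with h | h | h
    · have hset : Bad β β' = {α : Ordinal.{0} | α < β ∧
          (rho C α β ≠ rho C α β' ∨ cnt C α β ≠ cnt C α β')} := by
        rw [hBad]
        dsimp only
        rw [min_eq_left h.le]
      rw [hset]
      exact e_coh C hC1 hC2 hreg κ hC3 h (hbκ hβ')
    · subst h
      have hset : Bad β β = (∅ : Set Ordinal.{0}) := by
        ext α
        simp only [hBad, Set.mem_setOf_eq, Set.mem_empty_iff_false, iff_false, not_and]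
        intro _
        simp
      rw [hset]
      simpa using (isRegular_lift hreg).pos
    · have hset : Bad β β' = {α : Ordinal.{0} | α < β' ∧
          (rho C α β' ≠ rho C α β ∨ cnt C α β' ≠ cnt C α β)} := by
        rw [hBad]
        dsimp only
        rw [min_eq_right h.le]
        ext α
        simp only [Set.mem_setOf_eq]
        constructor
        · rintro ⟨h1, h2 | h2⟩
          exacts [⟨h1, Or.inl h2.symm⟩, ⟨h1, Or.inr h2.symm⟩]
        · rintro ⟨h1, h2 | h2⟩
          exacts [⟨h1, Or.inl h2.symm⟩, ⟨h1, Or.inr h2.symm⟩]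
      rw [hset]
      exact e_coh C hC1 hC2 hreg κ hC3 h (hbκ hβ)
  set Dbad : Set Ordinal.{0} := ⋃ β ∈ b, ⋃ β' ∈ b, Bad β β' with hDbad
  have hDcard : #(↥Dbad) < Cardinal.lift.{1} μ := by
    refine small_biUnion hreg hbcard fun β hβ => ?_
    exact small_biUnion hreg hbcard fun β' hβ' => hBadcard β hβ β' hβ'
  have hTD : (T \ Dbad).Nonempty := by
    rcases Set.eq_empty_or_nonempty (T \ Dbad) with h | h
    · exfalso
      have hsub : T ⊆ Dbad := Set.diff_eq_empty.1 h
      have := (Cardinal.mk_le_mk_of_subset hsub).trans_lt hDcard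
      rw [hTcard] at this
      exact lt_irrefl _ this
    · exact h
  obtain ⟨αs, hαsT, hαsD⟩ := hTD
  have hαsFib : αs < κ ∧ g αs = γ := hTFib hαsT
  have hαsδ : αs < δ := hTδ hαsT
  have hβ₀κ : β₀ < κ := hbκ hβ₀
  have hjμ : e β₀ αs < μ.ord := by
    rw [he]
    exact hπlt _ _ (rho_lt C hC1 hC2 hreg κ hC3 β₀ hβ₀κ αs)
      (cnt_lt C hC1 hC2 hreg κ hC3 hβ₀κ)
  have hkey : ∀ β ∈ b, rho C αs β = rho C αs β₀ ∧ cnt C αs β = cnt C αs β₀ := by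
    intro β hβ
    have hnB : αs ∉ Bad β β₀ := fun hc =>
      hαsD (Set.mem_biUnion hβ (Set.mem_biUnion hβ₀ hc))
    have hαlt : αs < min β β₀ :=
      lt_min (hαsδ.trans_le (hbIci β hβ)) (hαsδ.trans_le (hbIci β₀ hβ₀))
    have hno : ¬ (rho C αs β ≠ rho C αs β₀ ∨ cnt C αs β ≠ cnt C αs β₀) :=
      fun hcc => hnB ⟨hαlt, hcc⟩
    push_neg at hno
    exact hno
  refine ⟨e β₀ αs, hjμ, b, hbB, ?_⟩
  intro β hβ
  have hβκ : β < κ := hbκ hβ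
  have hαsβ : αs < β := hαsδ.trans_le (hbIci β hβ)
  have heβ : e β αs = e β₀ αs := by
    rw [he]
    dsimp only
    rw [(hkey β hβ).1, (hkey β hβ).2]
  have hexists : ∃ α, α < β ∧ e β α = e β₀ αs := ⟨αs, hαsβ, heβ⟩
  have hfeq : f (e β₀ αs) β = g hexists.choose := by
    rw [hf]
    dsimp only
    rw [dif_pos hexists]
  obtain ⟨hch1, hch2⟩ := hexists.choose_spec
  have hπeq : π (rho C hexists.choose β) (cnt C hexists.choose β)
      = π (rho C αs β) (cnt C αs β) := by
    have h2 : e β hexists.choose = e β αs := by rw [hch2, heβ]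
    exact h2
  have hcomp := hπinj _ _ _ _
    (rho_lt C hC1 hC2 hreg κ hC3 β hβκ _) (cnt_lt C hC1 hC2 hreg κ hC3 hβκ)
    (rho_lt C hC1 hC2 hreg κ hC3 β hβκ _) (cnt_lt C hC1 hC2 hreg κ hC3 hβκ) hπeq
  have hid : hexists.choose = αs := e_inj C hch1 hαsβ hcomp.1 hcomp.2
  rw [hfeq, hid]
  exact hαsFib.2

end GLem

/-- For every infinite regular `μ` there is a sequence `⟨f_j ∣ j < μ⟩` of functions
from `μ⁺` to `μ⁺` such that every pairwise disjoint `ℬ ⊆ [μ⁺]^{<μ}` of size `μ⁺`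
realizes every color `γ < μ⁺` constantly on some `b ∈ ℬ` via some `f_j`. -/
theorem grouping_lemma (μ : Cardinal.{0}) (hreg : μ.IsRegular) :
    ∃ f : Ordinal.{0} → Ordinal.{0} → Ordinal.{0},
      (∀ j < μ.ord, ∀ β < (Order.succ μ).ord, f j β < (Order.succ μ).ord) ∧
      ∀ B : Set (Set Ordinal),
        (∀ b ∈ B, b ⊆ Set.Iio (Order.succ μ).ord ∧ (otp b).card < Cardinal.lift.{1} μ) →
        B.PairwiseDisjoint id → #B = Cardinal.lift.{1} (Order.succ μ) →
        ∀ γ < (Order.succ μ).ord, ∃ j < μ.ord, ∃ b ∈ B, ∀ β ∈ b, f j β = γ :=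
  GLem.grouping_main μ hreg

end
end

section
/- Let κ be a regular uncountable cardinal, let ⟨C_α | α < κ⟩ be a C-sequence, and let λ : [κ]² → κ be the associated function from walks on ordinals. Then for all ordinals α < δ < β < κ with λ(δ, β) < α, the walk trace satisfies tr(α, β) = tr(δ, β) ⌢ tr(α, δ). -/
open Cardinal Ordinal Set

noncomputable section

-- step lemma
lemma step_lemma {κo : Ordinal} {C : Ordinal → Set Ordinal} (hC : IsCSeq κo C)
    {α γ : Ordinal} (hγ : γ < κo) (hα : α < γ) :
    α ≤ sInf (C γ ∩ Set.Ici α) ∧ sInf (C γ ∩ Set.Ici α) < γ := by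
  by_cases h : (C γ ∩ Set.Ici α).Nonempty
  · have hm := csInf_mem h
    exact ⟨hm.2, hC.1 γ hγ hm.1⟩
  · have hsub : C γ ⊆ Set.Iio α := fun x hx =>
      (lt_of_not_ge (fun h' => h ⟨x, hx, h'⟩) : x < α)
    rcases eq_or_lt_of_le (zero_le (a := α)) with h0 | h0
    · rw [Set.not_nonempty_iff_eq_empty] at h
      have he : sInf (∅ : Set Ordinal) = 0 := by simp
      rw [h, he, ← h0]
      exact ⟨le_refl 0, h0 ▸ hα⟩
    · exfalso
      by_cases hlim : ∀ γ' < α, ∃ x ∈ C γ, γ' < x ∧ x < α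
      · have := hC.2.1 γ hγ α h0 hα hlim
        exact absurd (hsub this) (lt_irrefl α)
      · push_neg at hlim
        obtain ⟨γ', hγ', hb⟩ := hlim
        have : α ≤ γ' := by
          refine hC.2.2 γ hγ γ' (fun x hx => ?_) α hα
          by_contra hgt
          exact absurd (hb x hx (lt_of_not_ge hgt)) (not_le.mpr (hsub hx))
        exact absurd (lt_of_le_of_lt this hγ') (lt_irrefl α)

lemma Tr_bounds {κo : Ordinal} {C : Ordinal → Set Ordinal} (hC : IsCSeq κo C)
    {α β : Ordinal} (hαβ : α ≤ β) (hβ : β < κo) :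
    ∀ n, α ≤ Tr C α β n ∧ Tr C α β n < κo := by
  intro n
  induction n with
  | zero => exact ⟨hαβ, hβ⟩
  | succ n ih =>
    by_cases h : α < Tr C α β n
    · have := step_lemma hC ih.2 h
      simp only [Tr, if_pos h]
      exact ⟨this.1, this.2.trans ih.2⟩
    · simp only [Tr, if_neg h]
      exact ⟨le_refl α, lt_of_le_of_lt ih.1 ih.2⟩

lemma exists_Tr_eq {κo : Ordinal} {C : Ordinal → Set Ordinal} (hC : IsCSeq κo C)
    {α β : Ordinal} (hαβ : α ≤ β) (hβ : β < κo) :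
    ∃ n, Tr C α β n = α := by
  by_contra h
  push_neg at h
  have hdec : ∀ n, Tr C α β (n + 1) < Tr C α β n := by
    intro n
    have hb := Tr_bounds hC hαβ hβ n
    have hlt : α < Tr C α β n := lt_of_le_of_ne hb.1 (Ne.symm (h n))
    simp only [Tr, if_pos hlt]
    exact (step_lemma hC hb.2 hlt).2
  obtain ⟨m, hm⟩ : ∃ m, Tr C α β m = (wellFounded_lt (α := Ordinal)).min
      (Set.range (Tr C α β)) ⟨β, 0, rfl⟩ := by
    have := (wellFounded_lt (α := Ordinal)).min_mem (Set.range (Tr C α β)) ⟨β, 0, rfl⟩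
    obtain ⟨m, hm⟩ := this
    exact ⟨m, hm⟩
  exact (wellFounded_lt (α := Ordinal)).not_lt_min (Set.range (Tr C α β))
    ⟨m + 1, rfl⟩ (hm ▸ hdec m)

lemma Tr_rho2 {κo : Ordinal} {C : Ordinal → Set Ordinal} (hC : IsCSeq κo C)
    {α β : Ordinal} (hαβ : α ≤ β) (hβ : β < κo) :
    Tr C α β (rho2 C α β) = α :=
  Nat.sInf_mem (exists_Tr_eq hC hαβ hβ)

lemma lt_Tr_of_lt_rho2 {κo : Ordinal} {C : Ordinal → Set Ordinal} (hC : IsCSeq κo C)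
    {α β : Ordinal} (hαβ : α ≤ β) (hβ : β < κo) {i : ℕ} (hi : i < rho2 C α β) :
    α < Tr C α β i := by
  have hne : Tr C α β i ≠ α := Nat.notMem_of_lt_sInf hi
  exact lt_of_le_of_ne (Tr_bounds hC hαβ hβ i).1 (Ne.symm hne)

end

noncomputable section

variable {κo : Ordinal} {C : Ordinal → Set Ordinal}

lemma lemmaA (hC : IsCSeq κo C) {α δ β : Ordinal}
    (h1 : α < δ) (h2 : δ < β) (h3 : β < κo) (h4 : lamb C δ β < α) :
    ∀ i ≤ rho2 C δ β, Tr C α β i = Tr C δ β i := by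
  intro i hi
  induction i with
  | zero => rfl
  | succ i ih =>
    have hin : i < rho2 C δ β := Nat.lt_of_succ_le hi
    have ihe := ih (le_of_lt hin)
    set γ := Tr C δ β i with hγdef
    have hδγ : δ < γ := lt_Tr_of_lt_rho2 hC h2.le h3 hin
    have hαγ : α < γ := h1.trans hδγ
    have hset : C γ ∩ Set.Ici α = C γ ∩ Set.Ici δ := by
      ext x
      constructor
      · rintro ⟨hx, hax⟩
        refine ⟨hx, ?_⟩
        by_contra hxδ
        have hxδ' : x < δ := lt_of_not_ge hxδ
        have hbdd : BddAbove (C γ ∩ Set.Iio δ) := ⟨δ, fun y hy => hy.2.le⟩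
        have hle : x ≤ sSup (C γ ∩ Set.Iio δ) := le_csSup hbdd ⟨hx, hxδ'⟩
        have hsup : sSup (C γ ∩ Set.Iio δ) ≤ lamb C δ β := by
          unfold lamb
          exact Finset.le_sup (f := fun i => sSup (C (Tr C δ β i) ∩ Set.Iio δ))
            (Finset.mem_range.mpr hin)
        exact absurd (hle.trans hsup) (not_le.mpr (lt_of_lt_of_le h4 hax))
      · rintro ⟨hx, hdx⟩
        exact ⟨hx, h1.le.trans hdx⟩
    show Tr C α β (i+1) = Tr C δ β (i+1)
    simp only [Tr, ← ihe, if_pos (ihe ▸ hαγ : α < Tr C α β i),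
      if_pos (hδγ : δ < Tr C δ β i)]
    rw [ihe, hset]
    rw [← hγdef, if_pos hδγ]

lemma lemmaB (hC : IsCSeq κo C) {α δ β : Ordinal}
    (h1 : α < δ) (h2 : δ < β) (h3 : β < κo) (h4 : lamb C δ β < α) :
    ∀ j, Tr C α β (rho2 C δ β + j) = Tr C α δ j := by
  intro j
  induction j with
  | zero =>
    show Tr C α β (rho2 C δ β) = δ
    rw [lemmaA hC h1 h2 h3 h4 _ le_rfl]
    exact Tr_rho2 hC h2.le h3
  | succ j ih =>
    show Tr C α β ((rho2 C δ β + j) + 1) = Tr C α δ (j + 1)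
    simp only [Tr, ih]

lemma rho2_add (hC : IsCSeq κo C) {α δ β : Ordinal}
    (h1 : α < δ) (h2 : δ < β) (h3 : β < κo) (h4 : lamb C δ β < α) :
    rho2 C α β = rho2 C δ β + rho2 C α δ := by
  have hδκ : δ < κo := h2.trans h3
  have hmem : Tr C α β (rho2 C δ β + rho2 C α δ) = α := by
    rw [lemmaB hC h1 h2 h3 h4]
    exact Tr_rho2 hC h1.le hδκ
  have hlb : ∀ k < rho2 C δ β + rho2 C α δ, Tr C α β k ≠ α := by
    intro k hk
    rcases le_or_gt k (rho2 C δ β) with hkn | hkn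
    · rw [lemmaA hC h1 h2 h3 h4 k hkn]
      have : δ ≤ Tr C δ β k := (Tr_bounds hC h2.le h3 k).1
      exact fun he => absurd (he ▸ this) (not_le.mpr h1)
    · obtain ⟨j, rfl⟩ := Nat.exists_eq_add_of_lt hkn
      have hjr : j + 1 ≤ rho2 C α δ := by omega
      have : rho2 C δ β + j + 1 = rho2 C δ β + (j + 1) := by omega
      rw [this, lemmaB hC h1 h2 h3 h4]
      intro he
      rcases lt_or_eq_of_le hjr with hj | hj
      · exact absurd he (ne_of_gt (lt_Tr_of_lt_rho2 hC h1.le hδκ hj))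
      · omega
  refine le_antisymm (Nat.sInf_le hmem) ?_
  by_contra hcon
  push_neg at hcon
  exact hlb _ hcon (Nat.sInf_mem (Set.nonempty_of_mem hmem : {n | Tr C α β n = α}.Nonempty))

/-- If `λ(δ,β) < α < δ < β < κ`, then `tr(α,β) = tr(δ,β) ⌢ tr(α,δ)`. -/
theorem walk_trace_concat (κ : Cardinal.{0}) (hreg : κ.IsRegular) (hκ : ℵ₀ < κ)
    (C : Ordinal.{0} → Set Ordinal.{0}) (hC : IsCSeq κ.ord C)
    (α δ β : Ordinal) (h1 : α < δ) (h2 : δ < β) (h3 : β < κ.ord)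
    (h4 : lamb C δ β < α) :
    trL C α β = trL C δ β ++ trL C α δ := by
  unfold trL
  rw [rho2_add hC h1 h2 h3 h4, List.range_add, List.map_append, List.map_map]
  congr 1
  · exact List.map_congr_left fun i hi =>
      lemmaA hC h1 h2 h3 h4 i (le_of_lt (List.mem_range.mp hi))
  · exact List.map_congr_left fun j _ => lemmaB hC h1 h2 h3 h4 j

end
end
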